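/- arXiv:2603.04594 — 8 statements merged into one kernel-verified Lean document; each statement's English description precedes it below -/
import Mathlib

section
/- Let α ∈ (0,1) and n ∈ ℕ. Then for every x > 0, the function y ↦ (1/Γ(1−α))·∫₀^y tⁿ·(y−t)^(−α) dt has derivative at x equal to (Γ(n+1)/Γ(n+1−α))·x^(n−α). (This is the Riemann–Liouville fractional derivative of order α of the monomial x ↦ xⁿ.) -/
open Real


lemma integral_eval (α : ℝ) (hα : α ∈ Set.Ioo (0 : ℝ) 1) (n : ℕ) {y : ℝ} (hy : 0 < y) :
    (∫ t in (0 : ℝ)..y, t ^ n * (y - t) ^ (-α)) =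
      (Real.Gamma ((n : ℝ) + 1) * Real.Gamma (1 - α) / Real.Gamma ((n : ℝ) + 2 - α)) *
        y ^ ((n : ℝ) + 1 - α) := by
  obtain ⟨hα0, hα1⟩ := hα
  have key : ((∫ t in (0 : ℝ)..y, t ^ n * (y - t) ^ (-α) : ℝ) : ℂ) =
      ∫ t in (0 : ℝ)..y, (t : ℂ) ^ (((n : ℂ) + 1) - 1) * ((y : ℂ) - t) ^ (((1 : ℂ) - α) - 1) := by
    rw [← intervalIntegral.integral_ofReal]
    refine intervalIntegral.integral_congr fun t ht => ?_
    rw [Set.uIcc_of_le hy.le] at ht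
    push_cast
    rw [add_sub_cancel_right, show (1:ℂ) - (α:ℂ) - 1 = ((-α : ℝ):ℂ) by push_cast; ring,
      show ((y:ℂ) - (t:ℂ)) = ((y - t : ℝ):ℂ) by push_cast; ring,
      ← Complex.ofReal_cpow (sub_nonneg.mpr ht.2), Complex.cpow_natCast,
      ← Complex.ofReal_pow, ← Complex.ofReal_mul]
  have hbeta := Complex.betaIntegral_scaled ((n : ℂ) + 1) ((1 : ℂ) - α) hy
  rw [hbeta] at key
  have hsre : 0 < Complex.re ((n : ℂ) + 1) := by simp; positivity
  have htre : 0 < Complex.re ((1 : ℂ) - α) := by simp [hα1]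
  have hG := Complex.Gamma_mul_Gamma_eq_betaIntegral hsre htre
  have hGne : Complex.Gamma ((n : ℂ) + 1 + ((1 : ℂ) - α)) ≠ 0 := by
    apply Complex.Gamma_ne_zero_of_re_pos
    simp only [Complex.add_re, Complex.sub_re, Complex.one_re, Complex.ofReal_re,
      Complex.natCast_re]
    linarith
  have hbval : Complex.betaIntegral ((n : ℂ) + 1) ((1 : ℂ) - α) =
      Complex.Gamma ((n : ℂ) + 1) * Complex.Gamma ((1 : ℂ) - α) /
        Complex.Gamma ((n : ℂ) + 1 + ((1 : ℂ) - α)) := by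
    rw [eq_div_iff hGne]; linear_combination -hG
  rw [hbval] at key
  have hpow : ((y : ℂ)) ^ (((n : ℂ) + 1) + ((1 : ℂ) - α) - 1) = ((y ^ ((n : ℝ) + 1 - α) : ℝ) : ℂ) := by
    rw [Complex.ofReal_cpow hy.le]
    congr 1
    push_cast; ring
  have hcast : ∀ r : ℝ, Complex.Gamma ((r : ℝ) : ℂ) = (Real.Gamma r : ℂ) :=
    fun r => Complex.Gamma_ofReal r
  have e1 : Complex.Gamma ((n : ℂ) + 1) = ((Real.Gamma ((n:ℝ)+1) : ℝ) : ℂ) := by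
    rw [show (n : ℂ) + 1 = (((n:ℝ) + 1 : ℝ) : ℂ) by push_cast; ring, Complex.Gamma_ofReal]
  have e2 : Complex.Gamma ((1 : ℂ) - α) = ((Real.Gamma (1-α) : ℝ) : ℂ) := by
    rw [show (1 : ℂ) - (α:ℂ) = (((1 - α : ℝ)) : ℂ) by push_cast; ring, Complex.Gamma_ofReal]
  have e3 : Complex.Gamma ((n : ℂ) + 1 + ((1 : ℂ) - α)) = ((Real.Gamma ((n:ℝ)+2-α) : ℝ) : ℂ) := by
    rw [show (n : ℂ) + 1 + ((1:ℂ) - (α:ℂ)) = (((n:ℝ) + 2 - α : ℝ) : ℂ) by push_cast; ring,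
      Complex.Gamma_ofReal]
  rw [hpow, e1, e2, e3] at key
  have := key
  rw [show ((y ^ ((n : ℝ) + 1 - α) : ℝ) : ℂ) * (((Real.Gamma ((n:ℝ)+1) : ℝ) : ℂ) * ((Real.Gamma (1-α) : ℝ):ℂ) / ((Real.Gamma ((n:ℝ)+2-α) :ℝ):ℂ)) = (((y ^ ((n : ℝ) + 1 - α) * (Real.Gamma ((n:ℝ)+1) * Real.Gamma (1-α) / Real.Gamma ((n:ℝ)+2-α)) : ℝ)) : ℂ) by push_cast; ring] at this
  have := Complex.ofReal_injective this
  rw [this]; ring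

/-- Riemann--Liouville fractional derivative of order `α ∈ (0,1)` of the monomial `x ↦ xⁿ`:
the function `y ↦ (1/Γ(1−α)) ∫₀ʸ tⁿ (y−t)^(−α) dt` has derivative
`(Γ(n+1)/Γ(n+1−α)) x^(n−α)` at every `x > 0`. -/
theorem rl_derivative_monomial (α : ℝ) (hα : α ∈ Set.Ioo (0 : ℝ) 1) (n : ℕ)
    (x : ℝ) (hx : 0 < x) :
    HasDerivAt
      (fun y : ℝ => (1 / Real.Gamma (1 - α)) * ∫ t in (0 : ℝ)..y, t ^ n * (y - t) ^ (-α))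
      ((Real.Gamma ((n : ℝ) + 1) / Real.Gamma ((n : ℝ) + 1 - α)) * x ^ ((n : ℝ) - α)) x := by
  obtain ⟨hα0, hα1⟩ := hα
  have h1α : (0:ℝ) < 1 - α := by linarith
  have hG1 : Real.Gamma (1 - α) ≠ 0 := (Real.Gamma_pos_of_pos h1α).ne'
  have hna : (0:ℝ) < (n:ℝ) + 1 - α := by
    have : (0:ℝ) ≤ n := Nat.cast_nonneg n
    linarith
  have hGn : Real.Gamma ((n:ℝ) + 1 - α) ≠ 0 := (Real.Gamma_pos_of_pos hna).ne'
  have hrec : Real.Gamma ((n:ℝ) + 2 - α) = ((n:ℝ)+1-α) * Real.Gamma ((n:ℝ)+1-α) := by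
    rw [show (n:ℝ)+2-α = ((n:ℝ)+1-α)+1 by ring, Real.Gamma_add_one hna.ne']
  set c : ℝ := (1 / Real.Gamma (1-α)) *
    (Real.Gamma ((n:ℝ)+1) * Real.Gamma (1-α) / Real.Gamma ((n:ℝ)+2-α)) with hc
  have hd : HasDerivAt (fun y : ℝ => c * y ^ ((n:ℝ)+1-α))
      (c * (((n:ℝ)+1-α) * x ^ ((n:ℝ)+1-α-1))) x :=
    (Real.hasDerivAt_rpow_const (Or.inl hx.ne')).const_mul c
  have heq : (fun y : ℝ => (1 / Real.Gamma (1 - α)) * ∫ t in (0:ℝ)..y, t ^ n * (y - t) ^ (-α))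
      =ᶠ[nhds x] (fun y => c * y ^ ((n:ℝ)+1-α)) := by
    filter_upwards [isOpen_Ioi.mem_nhds (Set.mem_Ioi.mpr hx)] with y hy
    rw [integral_eval α ⟨hα0, hα1⟩ n (Set.mem_Ioi.mp hy), hc]
    ring
  have hd2 := hd.congr_of_eventuallyEq heq
  convert hd2 using 1
  · rfl
  · rfl
  rw [hc, hrec, show (n:ℝ)+1-α-1 = (n:ℝ)-α by ring]
  field_simp
end

section
/- Let a : ℕ → ℝ satisfy a(n) ≥ 0 for all n and ∑_{n=0}^∞ n!·a(n) < ∞ (summable). Define f : ℝ → ℝ by f(λ) = ∑_{n=0}^∞ n!·λ^(2n)·a(n). Then the set { f′(λ) : λ ∈ (0,1) } of values of the derivative of f on (0,1) is bounded above if and only if ∑_{n=0}^∞ (1+n)·n!·a(n) < ∞ (summable). (Sequence form of Theorem 2.8 for m = 1: F ∈ D^{1,2} iff sup_{0<λ<1} ∂_λ ∫ |SF(λu)|² dν(u) < ∞.) -/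
open Real Filter

private lemma summable_F (a : ℕ → ℝ) (ha : ∀ n, 0 ≤ a n)
    (hsum : Summable fun n => (n.factorial : ℝ) * a n)
    {y : ℝ} (hy : |y| ≤ 1) :
    Summable fun n : ℕ => (n.factorial : ℝ) * y ^ (2 * n) * a n := by
  apply Summable.of_norm_bounded hsum
  intro n
  have h1 : |y| ^ (2 * n) ≤ 1 := pow_le_one₀ (abs_nonneg y) hy
  have h2 : (0:ℝ) ≤ (n.factorial : ℝ) := Nat.cast_nonneg _
  calc ‖(n.factorial : ℝ) * y ^ (2 * n) * a n‖
      = (n.factorial : ℝ) * |y| ^ (2 * n) * a n := by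
        rw [Real.norm_eq_abs, abs_mul, abs_mul, abs_pow, abs_of_nonneg h2,
          abs_of_nonneg (ha n)]
    _ ≤ (n.factorial : ℝ) * 1 * a n := by
        gcongr
        exact ha n
    _ = (n.factorial : ℝ) * a n := by ring

private lemma summable_deriv_terms (a : ℕ → ℝ) (ha : ∀ n, 0 ≤ a n)
    (hsum : Summable fun n => (n.factorial : ℝ) * a n)
    {r : ℝ} (hr0 : 0 ≤ r) (hr1 : r < 1) :
    Summable fun n : ℕ => (n.factorial : ℝ) * (((2 * n : ℕ) : ℝ) * r ^ (2 * n - 1)) * a n := by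
  have hb : Summable (fun n : ℕ => (n : ℝ) * r ^ n) := by
    have := summable_pow_mul_geometric_of_norm_lt_one (R := ℝ) 1
      (r := r) (by rwa [Real.norm_eq_abs, abs_of_nonneg hr0])
    simpa using this
  obtain ⟨C, hC⟩ := hb.tendsto_atTop_zero.bddAbove_range
  have hC' : ∀ n : ℕ, (n : ℝ) * r ^ n ≤ C := fun n => hC ⟨n, rfl⟩
  have hC0 : 0 ≤ C := le_trans (by simp) (hC' 0)
  refine Summable.of_nonneg_of_le (fun n => ?_) (fun n => ?_) (hsum.mul_left (2 * C))
  · have := ha n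
    positivity
  · have key : (n : ℝ) * r ^ (2 * n - 1) ≤ C := by
      rcases Nat.eq_zero_or_pos n with h | h
      · simp [h, hC0]
      · calc (n : ℝ) * r ^ (2 * n - 1) ≤ (n : ℝ) * r ^ n :=
              mul_le_mul_of_nonneg_left
                (pow_le_pow_of_le_one hr0 hr1.le (show n ≤ 2 * n - 1 by omega))
                (Nat.cast_nonneg n)
          _ ≤ C := hC' n
    have hfa : (0:ℝ) ≤ (n.factorial : ℝ) * a n :=
      mul_nonneg (Nat.cast_nonneg _) (ha n)
    have : (n.factorial : ℝ) * (((2 * n : ℕ) : ℝ) * r ^ (2 * n - 1)) * a n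
        = 2 * ((n : ℝ) * r ^ (2 * n - 1)) * ((n.factorial : ℝ) * a n) := by
      push_cast; ring
    rw [this]
    calc 2 * ((n : ℝ) * r ^ (2 * n - 1)) * ((n.factorial : ℝ) * a n)
        ≤ 2 * C * ((n.factorial : ℝ) * a n) := by
          apply mul_le_mul_of_nonneg_right _ hfa
          linarith
      _ = (2 * C) * ((n.factorial : ℝ) * a n) := by ring

private lemma deriv_formula (a : ℕ → ℝ) (ha : ∀ n, 0 ≤ a n)
    (hsum : Summable fun n => (n.factorial : ℝ) * a n)
    {x : ℝ} (hx : x ∈ Set.Ioo (0:ℝ) 1) :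
    HasDerivAt (fun y : ℝ => ∑' n : ℕ, (n.factorial : ℝ) * y ^ (2 * n) * a n)
      (∑' n : ℕ, (n.factorial : ℝ) * (((2 * n : ℕ) : ℝ) * x ^ (2 * n - 1)) * a n) x := by
  set r : ℝ := (x + 1) / 2 with hr
  have hr0 : 0 < r := by simp only [hr]; linarith [hx.1]
  have hr1 : r < 1 := by simp only [hr]; linarith [hx.2]
  apply hasDerivAt_tsum_of_isPreconnected
    (u := fun n : ℕ => (n.factorial : ℝ) * (((2 * n : ℕ) : ℝ) * r ^ (2 * n - 1)) * a n)
    (t := Set.Ioo (-r) r)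
    (g' := fun n y => (n.factorial : ℝ) * (((2 * n : ℕ) : ℝ) * y ^ (2 * n - 1)) * a n)
    (y₀ := 0)
  · exact summable_deriv_terms a ha hsum hr0.le hr1
  · exact isOpen_Ioo
  · exact (convex_Ioo _ _).isPreconnected
  · intro n y _
    exact ((hasDerivAt_pow (2 * n) y).const_mul ((n.factorial : ℝ))).mul_const (a n)
  · intro n y hy
    have hyr : |y| ≤ r := by
      rw [abs_le]; exact ⟨hy.1.le, hy.2.le⟩
    have h2 : (0:ℝ) ≤ (n.factorial : ℝ) := Nat.cast_nonneg _
    have h3 : (0:ℝ) ≤ ((2 * n : ℕ) : ℝ) := Nat.cast_nonneg _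
    calc ‖(n.factorial : ℝ) * (((2 * n : ℕ) : ℝ) * y ^ (2 * n - 1)) * a n‖
        = (n.factorial : ℝ) * (((2 * n : ℕ) : ℝ) * |y| ^ (2 * n - 1)) * a n := by
          rw [Real.norm_eq_abs, abs_mul, abs_mul, abs_mul, abs_pow,
            abs_of_nonneg h2, abs_of_nonneg h3, abs_of_nonneg (ha n)]
      _ ≤ (n.factorial : ℝ) * (((2 * n : ℕ) : ℝ) * r ^ (2 * n - 1)) * a n := by
          gcongr
          exact ha n
  · exact Set.mem_Ioo.2 ⟨by linarith, hr0⟩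
  · exact summable_F a ha hsum (by simp)
  · exact Set.mem_Ioo.2 ⟨by linarith [hx.1], by simp only [hr]; linarith [hx.2]⟩

/-- Sequence form of Theorem 2.8 for `m = 1`: for `f(λ) = ∑ n! λ^(2n) a n` with `a ≥ 0` and
`∑ n! a n < ∞`, the derivative of `f` is bounded above on `(0,1)` iff
`∑ (1+n) n! a n < ∞`. -/
theorem malliavin_D12_characterization (a : ℕ → ℝ) (ha : ∀ n, 0 ≤ a n)
    (hsum : Summable fun n => (n.factorial : ℝ) * a n)
    (f : ℝ → ℝ) (hf : ∀ x : ℝ, f x = ∑' n : ℕ, (n.factorial : ℝ) * x ^ (2 * n) * a n) :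
    BddAbove (deriv f '' Set.Ioo (0 : ℝ) 1) ↔
      Summable fun n : ℕ => (1 + (n : ℝ)) * (n.factorial : ℝ) * a n := by
  have hfF : f = fun y : ℝ => ∑' n : ℕ, (n.factorial : ℝ) * y ^ (2 * n) * a n := funext hf
  have hd : ∀ x ∈ Set.Ioo (0:ℝ) 1,
      deriv f x = ∑' n : ℕ, (n.factorial : ℝ) * (((2 * n : ℕ) : ℝ) * x ^ (2 * n - 1)) * a n := by
    intro x hx
    rw [hfF]
    exact (deriv_formula a ha hsum hx).deriv
  constructor
  · rintro ⟨M, hM⟩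
    have hM' : ∀ x ∈ Set.Ioo (0:ℝ) 1,
        (∑' n : ℕ, (n.factorial : ℝ) * (((2 * n : ℕ) : ℝ) * x ^ (2 * n - 1)) * a n) ≤ M := by
      intro x hx
      rw [← hd x hx]
      exact hM ⟨x, hx, rfl⟩
    have h1 : Summable fun n : ℕ => (n : ℝ) * (n.factorial : ℝ) * a n := by
      apply summable_of_sum_range_le (c := M / 2)
      · intro n
        have := ha n
        positivity
      · intro N
        -- partial sums of derivative series are ≤ M for each x ∈ (0,1); take x → 1⁻
        have key : ∀ x ∈ Set.Ioo (0:ℝ) 1,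
            (∑ n ∈ Finset.range N,
              (n.factorial : ℝ) * (((2 * n : ℕ) : ℝ) * x ^ (2 * n - 1)) * a n) ≤ M := by
          intro x hx
          refine le_trans (Summable.sum_le_tsum (Finset.range N) (fun i _ => ?_) ?_) (hM' x hx)
          · have h0 : (0:ℝ) ≤ x := hx.1.le
            have := ha i
            positivity
          · exact summable_deriv_terms a ha hsum hx.1.le hx.2
        have hcont : Tendsto (fun x : ℝ => ∑ n ∈ Finset.range N,
            (n.factorial : ℝ) * (((2 * n : ℕ) : ℝ) * x ^ (2 * n - 1)) * a n)
            (nhdsWithin 1 (Set.Iio 1))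
            (nhds (∑ n ∈ Finset.range N,
              (n.factorial : ℝ) * (((2 * n : ℕ) : ℝ) * (1:ℝ) ^ (2 * n - 1)) * a n)) := by
          apply tendsto_nhdsWithin_of_tendsto_nhds
          exact (Continuous.tendsto (by continuity) 1)
        have hev : ∀ᶠ x in nhdsWithin 1 (Set.Iio 1),
            (∑ n ∈ Finset.range N,
              (n.factorial : ℝ) * (((2 * n : ℕ) : ℝ) * x ^ (2 * n - 1)) * a n) ≤ M := by
          have hmem : Set.Ioo (0:ℝ) 1 ∈ nhdsWithin 1 (Set.Iio 1) :=
            Ioo_mem_nhdsLT_of_mem (a := (0:ℝ)) (c := 1)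
              (Set.mem_Ioc.2 ⟨by norm_num, le_refl (1:ℝ)⟩)
          filter_upwards [hmem] with x hx using key x hx
        have hle : (∑ n ∈ Finset.range N,
            (n.factorial : ℝ) * (((2 * n : ℕ) : ℝ) * (1:ℝ) ^ (2 * n - 1)) * a n) ≤ M :=
          le_of_tendsto hcont hev
        have heq : (∑ n ∈ Finset.range N,
            (n.factorial : ℝ) * (((2 * n : ℕ) : ℝ) * (1:ℝ) ^ (2 * n - 1)) * a n)
            = 2 * ∑ n ∈ Finset.range N, (n : ℝ) * (n.factorial : ℝ) * a n := by
          rw [Finset.mul_sum]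
          apply Finset.sum_congr rfl
          intro n _
          rw [one_pow]
          push_cast
          ring
        rw [heq] at hle
        linarith
    have : Summable fun n : ℕ => (n.factorial : ℝ) * a n + (n : ℝ) * (n.factorial : ℝ) * a n :=
      hsum.add h1
    apply this.congr
    intro n
    ring
  · intro hS
    refine ⟨2 * ∑' n : ℕ, (1 + (n : ℝ)) * (n.factorial : ℝ) * a n, ?_⟩
    rintro z ⟨x, hx, rfl⟩
    rw [hd x hx]
    have h2 : (∑' n : ℕ, 2 * ((1 + (n : ℝ)) * (n.factorial : ℝ) * a n))
        = 2 * ∑' n : ℕ, (1 + (n : ℝ)) * (n.factorial : ℝ) * a n := tsum_mul_left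
    rw [← h2]
    apply Summable.tsum_le_tsum _ (summable_deriv_terms a ha hsum hx.1.le hx.2) (hS.mul_left 2)
    intro n
    have hxp : (0:ℝ) ≤ x := hx.1.le
    have hx1 : x ^ (2 * n - 1) ≤ 1 := pow_le_one₀ hxp hx.2.le
    have hfa : (0:ℝ) ≤ (n.factorial : ℝ) * a n := mul_nonneg (Nat.cast_nonneg _) (ha n)
    have hcast : ((2 * n : ℕ) : ℝ) = 2 * (n : ℝ) := by push_cast; ring
    rw [hcast]
    nlinarith [hfa, hx1, pow_nonneg hxp (2 * n - 1),
      (Nat.cast_nonneg n : (0:ℝ) ≤ (n:ℝ)),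
      mul_nonneg (Nat.cast_nonneg n : (0:ℝ) ≤ (n:ℝ)) hfa,
      mul_le_mul_of_nonneg_left hx1
        (mul_nonneg (Nat.cast_nonneg n : (0:ℝ) ≤ (n:ℝ)) hfa)]
end

section
/- Let a : ℕ → ℝ satisfy a(n) ≥ 0 for all n and ∑_{n=0}^∞ n!·a(n) < ∞ (summable). Define f : ℝ → ℝ by f(λ) = ∑_{n=0}^∞ n!·λ^(2n)·a(n). Then for every m ∈ ℕ, the set { (iteratedDeriv m f)(λ) : λ ∈ (0,1) } of values of the m-th derivative of f on (0,1) is bounded above if and only if ∑_{n=0}^∞ (1+n^m)·n!·a(n) < ∞ (summable). (Sequence form of Theorem 2.8: F ∈ D^{m,2} iff sup_{0<λ<1} ∂^m_λ ∫ |SF(λu)|² dν(u) < ∞.) -/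
open Real

open Filter Set

namespace MalliavinAux

noncomputable def T (c : ℕ → ℝ) : ℕ → ℝ := fun n => ((n : ℝ) + 1) * c (n + 1)

lemma iterate_T (m : ℕ) : ∀ (c : ℕ → ℝ) (n : ℕ),
    (T^[m] c) n = ((n + m).descFactorial m : ℝ) * c (n + m) := by
  induction m with
  | zero => intro c n; simp
  | succ m ih =>
    intro c n
    rw [Function.iterate_succ_apply, ih]
    have h : (n + m + 1).descFactorial (m + 1) = (n + m + 1) * (n + m).descFactorial m :=
      Nat.succ_descFactorial_succ (n + m) m
    simp only [T]
    rw [show n + (m + 1) = n + m + 1 from rfl, h]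
    push_cast
    ring

lemma summable_T {c : ℕ → ℝ} (hc : ∀ n, 0 ≤ c n)
    (hs : ∀ r ∈ Set.Ioo (0:ℝ) 1, Summable fun n => c n * r ^ n) :
    ∀ r ∈ Set.Ioo (0:ℝ) 1, Summable fun n => T c n * r ^ n := by
  intro r hr
  obtain ⟨hr0, hr1⟩ := hr
  set ρ : ℝ := (r + 1) / 2 with hρdef
  have hρ0 : 0 < ρ := by positivity
  have hrρ : r < ρ := by simp only [hρdef]; linarith
  have hρ1 : ρ < 1 := by simp only [hρdef]; linarith
  clear_value ρ
  have hsum := hs ρ ⟨hρ0, hρ1⟩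
  set M := ∑' n, c n * ρ ^ n with hM
  have hM_le : ∀ n, c n * ρ ^ n ≤ M := fun n =>
    Summable.le_tsum hsum n (fun k _ => by have := hc k; positivity)
  clear_value M
  set q := r / ρ with hq
  have hq0 : 0 ≤ q := by positivity
  have hq1 : q < 1 := (div_lt_one hρ0).2 hrρ
  have hgeom : Summable fun n : ℕ => ((n:ℝ) + 1) * q ^ n := by
    have h1 : Summable fun n : ℕ => (n:ℝ) ^ 1 * q ^ n :=
      summable_pow_mul_geometric_of_norm_lt_one 1
        (by rwa [Real.norm_eq_abs, abs_of_nonneg hq0])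
    have h2 : Summable fun n : ℕ => q ^ n := summable_geometric_of_lt_one hq0 hq1
    simpa [pow_one, add_mul, one_mul] using h1.add h2
  apply Summable.of_nonneg_of_le
    (fun n => by have := hc (n+1); have : (0:ℝ) ≤ T c n := by unfold T; positivity
                 positivity)
    ?_ (hgeom.mul_left (M / ρ))
  intro n
  have h1 : c (n+1) ≤ M / ρ ^ (n+1) := by
    rw [le_div_iff₀ (by positivity)]; exact hM_le (n+1)
  have hrn : (0:ℝ) ≤ r ^ n := by positivity
  calc T c n * r ^ n = ((n:ℝ)+1) * c (n+1) * r ^ n := rfl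
    _ ≤ ((n:ℝ)+1) * (M / ρ ^ (n+1)) * r ^ n := by
        gcongr
    _ = M / ρ * (((n:ℝ)+1) * q ^ n) := by
        rw [hq, div_pow, pow_succ]
        have hρn : (ρ:ℝ) ^ n ≠ 0 := by positivity
        field_simp


lemma hasDerivAt_psum {c : ℕ → ℝ} (hc : ∀ n, 0 ≤ c n)
    (hs : ∀ r ∈ Set.Ioo (0:ℝ) 1, Summable fun n => c n * r ^ n)
    {x : ℝ} (hx : x ∈ Set.Ioo (0:ℝ) 1) :
    HasDerivAt (fun y : ℝ => ∑' n, c n * y ^ n) (∑' n, T c n * x ^ n) x := by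
  obtain ⟨hx0, hx1⟩ := hx
  set ρ : ℝ := (x + 1) / 2 with hρdef
  have hρ0 : 0 < ρ := by positivity
  have hxρ : x < ρ := by simp only [hρdef]; linarith
  have hρ1 : ρ < 1 := by simp only [hρdef]; linarith
  clear_value ρ
  have hu : Summable fun n => T c n * ρ ^ n := summable_T hc hs ρ ⟨hρ0, hρ1⟩
  have key : HasDerivAt (fun y : ℝ => ∑' n, c (n + 1) * y ^ (n + 1))
      (∑' n, T c n * x ^ n) x := by
    apply hasDerivAt_tsum_of_isPreconnected hu isOpen_Ioo
      (isPreconnected_Ioo (a := (0:ℝ)) (b := ρ))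
      (g := fun n y => c (n + 1) * y ^ (n + 1)) (g' := fun n y => T c n * y ^ n)
      (y₀ := x) ?_ ?_ ⟨hx0, hxρ⟩ ?_ ⟨hx0, hxρ⟩
    · intro n y _
      have h := (hasDerivAt_pow (n + 1) y).const_mul (c (n + 1))
      convert h using 1
      · rfl
      simp only [T, Nat.add_sub_cancel]
      push_cast
      ring
    · intro n y hy
      have hT : 0 ≤ T c n := by
        have := hc (n + 1); unfold T; positivity
      have hy0 : (0:ℝ) ≤ y := hy.1.le
      rw [Real.norm_eq_abs, abs_of_nonneg (by positivity)]
      exact mul_le_mul_of_nonneg_left (pow_le_pow_left₀ hy0 hy.2.le n) hT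
    · exact (summable_nat_add_iff 1).2 (hs x ⟨hx0, hx1⟩)
  have heq : (fun y : ℝ => ∑' n, c n * y ^ n)
      =ᶠ[nhds x] fun y => c 0 + ∑' n, c (n + 1) * y ^ (n + 1) := by
    filter_upwards [isOpen_Ioo.mem_nhds (show x ∈ Set.Ioo (0:ℝ) 1 from ⟨hx0, hx1⟩)] with y hy
    rw [Summable.tsum_eq_zero_add (hs y hy)]
    simp
  exact ((key.const_add (c 0)).congr_of_eventuallyEq heq)

lemma iter_props {c : ℕ → ℝ} (hc : ∀ n, 0 ≤ c n)
    (hs : ∀ r ∈ Set.Ioo (0:ℝ) 1, Summable fun n => c n * r ^ n) (m : ℕ) :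
    (∀ n, 0 ≤ T^[m] c n) ∧ (∀ r ∈ Set.Ioo (0:ℝ) 1, Summable fun n => T^[m] c n * r ^ n) := by
  induction m with
  | zero => exact ⟨hc, hs⟩
  | succ m ih =>
    constructor
    · intro n
      rw [Function.iterate_succ_apply']
      have := ih.1 (n + 1)
      unfold T
      positivity
    · intro r hr
      have := summable_T ih.1 ih.2 r hr
      simpa [Function.iterate_succ_apply'] using this

lemma iteratedDeriv_psum {c : ℕ → ℝ} (hc : ∀ n, 0 ≤ c n)
    (hs : ∀ r ∈ Set.Ioo (0:ℝ) 1, Summable fun n => c n * r ^ n) (m : ℕ) :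
    ∀ x ∈ Set.Ioo (0:ℝ) 1,
      iteratedDeriv m (fun y : ℝ => ∑' n, c n * y ^ n) x = ∑' n, (T^[m] c) n * x ^ n := by
  induction m with
  | zero => intro x hx; simp
  | succ m ih =>
    intro x hx
    rw [iteratedDeriv_succ]
    have heq : iteratedDeriv m (fun y : ℝ => ∑' n, c n * y ^ n)
        =ᶠ[nhds x] fun y => ∑' n, (T^[m] c) n * y ^ n :=
      Filter.eventuallyEq_of_mem (isOpen_Ioo.mem_nhds hx) ih
    rw [heq.deriv_eq]
    have h := iter_props hc hs m
    have hd := hasDerivAt_psum h.1 h.2 hx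
    rw [hd.deriv]
    rw [Function.iterate_succ_apply']

end MalliavinAux

open MalliavinAux in

/-- Sequence form of Theorem 2.8: for `f(λ) = ∑ n! λ^(2n) a n` with `a ≥ 0` and
`∑ n! a n < ∞`, and any `m ∈ ℕ`, the `m`-th derivative of `f` is bounded above on `(0,1)` iff
`∑ (1+n^m) n! a n < ∞`. -/
theorem malliavin_Dm2_characterization (a : ℕ → ℝ) (ha : ∀ n, 0 ≤ a n)
    (hsum : Summable fun n => (n.factorial : ℝ) * a n)
    (f : ℝ → ℝ) (hf : ∀ x : ℝ, f x = ∑' n : ℕ, (n.factorial : ℝ) * x ^ (2 * n) * a n)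
    (m : ℕ) :
    BddAbove (iteratedDeriv m f '' Set.Ioo (0 : ℝ) 1) ↔
      Summable fun n : ℕ => (1 + (n : ℝ) ^ m) * (n.factorial : ℝ) * a n := by
  classical
  set c : ℕ → ℝ := fun k => if Even k then ((k / 2).factorial : ℝ) * a (k / 2) else 0 with hcdef
  have hc : ∀ k, 0 ≤ c k := by
    intro k
    simp only [hcdef]
    split_ifs
    · exact mul_nonneg (by positivity) (ha _)
    · exact le_refl 0
  have hc2 : ∀ n, c (2 * n) = (n.factorial : ℝ) * a n := by
    intro n
    simp only [hcdef]
    rw [if_pos (even_two_mul n), Nat.mul_div_cancel_left n (by norm_num)]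
  have hodd : ∀ k, ¬ Even k → c k = 0 := by
    intro k hk
    simp only [hcdef, if_neg hk]
  clear_value c
  have hinj : Function.Injective (fun n : ℕ => 2 * n) := fun a b h => by
    simpa using h
  have hvan : ∀ (w : ℕ → ℝ), (∀ k, c k = 0 → w k = 0) →
      ∀ k ∉ Set.range (fun n : ℕ => 2 * n), w k = 0 := by
    intro w hw k hk
    apply hw
    apply hodd
    rintro ⟨j, hj⟩
    exact hk ⟨j, show 2 * j = k by omega⟩
  have hfc : ∀ x : ℝ, f x = ∑' k, c k * x ^ k := by
    intro x
    rw [hf x]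
    have hsupp : Function.support (fun k => c k * x ^ k) ⊆
        Set.range (fun n : ℕ => 2 * n) := by
      intro k hk
      by_contra h
      exact hk (hvan (fun k => c k * x ^ k) (fun k h => by simp [h]) k h)
    have := hinj.tsum_eq (f := fun k => c k * x ^ k) hsupp
    rw [← this]
    refine tsum_congr fun n => ?_
    show (n.factorial : ℝ) * x ^ (2 * n) * a n = c (2 * n) * x ^ (2 * n)
    rw [hc2 n]
    ring
  have hs : ∀ r ∈ Set.Ioo (0:ℝ) 1, Summable fun k => c k * r ^ k := by
    intro r hr
    rw [← Function.Injective.summable_iff hinj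
      (hvan _ (fun k h => by simp [h]))]
    apply Summable.of_nonneg_of_le _ _ hsum
    · intro n
      have h1 := hc (2 * n)
      have h2 : (0:ℝ) ≤ r ^ (2 * n) := pow_nonneg hr.1.le _
      simpa [Function.comp] using mul_nonneg h1 h2
    · intro n
      show c (2 * n) * r ^ (2 * n) ≤ (n.factorial : ℝ) * a n
      rw [hc2 n]
      exact mul_le_of_le_one_right (by have := ha n; positivity)
        (pow_le_one₀ hr.1.le hr.2.le)
  have hbase : Summable c := by
    rw [← Function.Injective.summable_iff hinj (fun k hk => hvan c (fun _ h => h) k hk)]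
    exact hsum.congr (fun n => (hc2 n).symm)
  have hgx : ∀ x ∈ Set.Ioo (0:ℝ) 1,
      Summable fun k => (((k + m).descFactorial m : ℕ) : ℝ) * c (k + m) * x ^ k :=
    fun x hx => ((iter_props hc hs m).2 x hx).congr (fun k => by rw [iterate_T])
  have hform : ∀ x ∈ Set.Ioo (0:ℝ) 1, iteratedDeriv m f x
      = ∑' k, (((k + m).descFactorial m : ℕ) : ℝ) * c (k + m) * x ^ k := by
    intro x hx
    have hfe : f = fun y : ℝ => ∑' k, c k * y ^ k := funext hfc
    rw [hfe, iteratedDeriv_psum hc hs m x hx]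
    exact tsum_congr fun k => by rw [iterate_T]
  constructor
  · rintro ⟨B, hB⟩
    have hgsum : Summable (fun k => (((k + m).descFactorial m : ℕ) : ℝ) * c (k + m)) := by
      apply summable_of_sum_range_le (c := B) (fun k => mul_nonneg (by positivity) (hc _))
      intro N
      have hcont : Continuous fun x : ℝ =>
          ∑ k ∈ Finset.range N, (((k + m).descFactorial m : ℕ) : ℝ) * c (k + m) * x ^ k := by
        apply continuous_finset_sum
        intro k _
        exact continuous_const.mul (continuous_pow k)
      have hlim : Filter.Tendsto (fun x : ℝ =>
          ∑ k ∈ Finset.range N, (((k + m).descFactorial m : ℕ) : ℝ) * c (k + m) * x ^ k)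
          (nhdsWithin 1 (Set.Iio 1))
          (nhds (∑ k ∈ Finset.range N, (((k + m).descFactorial m : ℕ) : ℝ) * c (k + m))) := by
        have h1 := hcont.tendsto 1
        simp only [one_pow, mul_one] at h1
        exact h1.mono_left nhdsWithin_le_nhds
      refine le_of_tendsto hlim ?_
      filter_upwards [Ioo_mem_nhdsLT_of_mem
        (show (1:ℝ) ∈ Set.Ioc (0:ℝ) 1 from ⟨one_pos, le_refl 1⟩)] with x hx
      calc ∑ k ∈ Finset.range N, (((k + m).descFactorial m : ℕ) : ℝ) * c (k + m) * x ^ k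
          ≤ ∑' k, (((k + m).descFactorial m : ℕ) : ℝ) * c (k + m) * x ^ k :=
            Summable.sum_le_tsum _ (fun k _ => mul_nonneg (mul_nonneg (by positivity) (hc _)) (pow_nonneg hx.1.le k)) (hgx x hx)
        _ = iteratedDeriv m f x := (hform x hx).symm
        _ ≤ B := hB ⟨x, hx, rfl⟩
    have S2 : Summable (fun k => ((k.descFactorial m : ℕ) : ℝ) * c k) :=
      (summable_nat_add_iff (f := fun k => ((k.descFactorial m : ℕ) : ℝ) * c k) m).1 hgsum
    have Spow : Summable (fun k : ℕ => (k:ℝ) ^ m * c k) := by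
      rw [← summable_nat_add_iff (f := fun k : ℕ => (k:ℝ) ^ m * c k) (2 * m)]
      have htail : Summable (fun n : ℕ => (((n + 2*m).descFactorial m : ℕ) : ℝ) * c (n + 2*m)) :=
        (summable_nat_add_iff (f := fun k => ((k.descFactorial m : ℕ) : ℝ) * c k) (2*m)).2 S2
      apply Summable.of_nonneg_of_le _ _ (htail.mul_left (2 ^ m))
      · intro n
        have := hc (n + 2*m)
        positivity
      · intro n
        have hnat : (n + 2*m) ^ m ≤ 2 ^ m * (n + 2*m).descFactorial m := by
          calc (n + 2*m) ^ m ≤ (2 * (n + 2*m + 1 - m)) ^ m :=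
                Nat.pow_le_pow_left (by omega) m
            _ = 2 ^ m * (n + 2*m + 1 - m) ^ m := by rw [Nat.mul_pow]
            _ ≤ 2 ^ m * (n + 2*m).descFactorial m :=
                Nat.mul_le_mul_left _ (Nat.pow_sub_le_descFactorial (n + 2*m) m)
        calc ((n + 2*m : ℕ):ℝ) ^ m * c (n + 2*m)
            ≤ (2 ^ m * (((n + 2*m).descFactorial m : ℕ) : ℝ)) * c (n + 2*m) := by
              apply mul_le_mul_of_nonneg_right _ (hc _)
              exact_mod_cast hnat
          _ = 2 ^ m * ((((n + 2*m).descFactorial m : ℕ) : ℝ) * c (n + 2*m)) := by ring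
    have S3 : Summable (fun k : ℕ => (1 + (k:ℝ) ^ m) * c k) :=
      (hbase.add Spow).congr (fun k => by ring)
    have S4 : Summable (fun n : ℕ => (1 + ((2*n : ℕ):ℝ) ^ m) * c (2*n)) :=
      (Function.Injective.summable_iff hinj
        (hvan _ (fun k h => by simp [h]))).2 S3
    apply Summable.of_nonneg_of_le _ _ S4
    · intro n
      have h1 := ha n
      positivity
    · intro n
      rw [hc2 n]
      have h1 : ((n:ℕ):ℝ) ^ m ≤ ((2*n : ℕ):ℝ) ^ m := by
        apply pow_le_pow_left₀ (by positivity)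
        exact_mod_cast Nat.le_mul_of_pos_left n (by norm_num)
      have h2 : (0:ℝ) ≤ (n.factorial : ℝ) * a n := by have := ha n; positivity
      calc (1 + (n:ℝ) ^ m) * (n.factorial : ℝ) * a n
          = (1 + (n:ℝ) ^ m) * ((n.factorial : ℝ) * a n) := by ring
        _ ≤ (1 + ((2*n : ℕ):ℝ) ^ m) * ((n.factorial : ℝ) * a n) := by
            apply mul_le_mul_of_nonneg_right _ h2
            linarith
  · intro hA
    have h2m : (1:ℝ) ≤ 2 ^ m := by
      calc (1:ℝ) = 1 ^ m := (one_pow m).symm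
        _ ≤ 2 ^ m := by gcongr <;> norm_num
    have Spow' : Summable (fun n : ℕ => (1 + ((2*n : ℕ):ℝ) ^ m) * ((n.factorial:ℝ) * a n)) := by
      apply Summable.of_nonneg_of_le _ _ (hA.mul_left (2 ^ m))
      · intro n
        have h1 := ha n
        positivity
      · intro n
        have h1 : ((2*n : ℕ):ℝ) ^ m = 2 ^ m * (n:ℝ) ^ m := by push_cast; rw [mul_pow]
        have hna : (0:ℝ) ≤ (n.factorial:ℝ) * a n := by have := ha n; positivity
        have hx0 : (0:ℝ) ≤ (n:ℝ) ^ m := by positivity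
        rw [h1]
        nlinarith [mul_nonneg (sub_nonneg.2 h2m) hna]
    have S3 : Summable (fun k : ℕ => (1 + (k:ℝ) ^ m) * c k) := by
      rw [← Function.Injective.summable_iff hinj
        (hvan _ (fun k h => by simp [h]))]
      exact Spow'.congr (fun n => by
        show _ = (1 + ((2*n : ℕ):ℝ) ^ m) * c (2*n)
        rw [hc2])
    have S2 : Summable (fun k : ℕ => ((k.descFactorial m : ℕ) : ℝ) * c k) := by
      apply Summable.of_nonneg_of_le (fun k => mul_nonneg (by positivity) (hc k)) _ S3
      intro k
      apply mul_le_mul_of_nonneg_right _ (hc k)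
      calc ((k.descFactorial m : ℕ):ℝ) ≤ (k:ℝ) ^ m := by
            exact_mod_cast Nat.descFactorial_le_pow k m
        _ ≤ 1 + (k:ℝ) ^ m := le_add_of_nonneg_left zero_le_one
    have hgsum : Summable (fun k => (((k + m).descFactorial m : ℕ) : ℝ) * c (k + m)) :=
      (summable_nat_add_iff (f := fun k => ((k.descFactorial m : ℕ) : ℝ) * c k) m).2 S2
    refine ⟨∑' k, (((k + m).descFactorial m:ℕ):ℝ) * c (k + m), ?_⟩
    rintro y ⟨x, hx, rfl⟩
    rw [hform x hx]
    apply Summable.tsum_le_tsum _ (hgx x hx) hgsum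
    intro k
    exact mul_le_of_le_one_right (mul_nonneg (by positivity) (hc _))
      (pow_le_one₀ hx.1.le hx.2.le)
end

section
/- Let α ∈ (0,1) and let a : ℕ → [0,∞] (extended nonnegative reals). Define f : (0,1) → [0,∞] by f(λ) = ∑_{n=0}^∞ n!·λ^(2n)·a(n), a tsum in [0,∞]. Then the Lebesgue lower integral (1/Γ(α))·∫₀¹ (1−λ)^(α−1)·f(λ) dλ equals ∑_{n=0}^∞ (Γ(2n+1)/Γ(2n+1+α))·n!·a(n), and this quantity is finite if and only if ∑_{n=0}^∞ (n!/(1+n^α))·a(n) < ∞. (Sequence form of Theorem 2.11 for m = 0: Φ ∈ D^{−α,2} iff the Riemann–Liouville integral of order α of λ ↦ ∫ |SΦ(λu)|² dν(u), evaluated at 1, is finite.) -/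
open MeasureTheory ENNReal Real
open Set

lemma real_betaIntegral {u v : ℝ} (hu : 0 < u) (hv : 0 < v) :
    ∫ x in (0:ℝ)..1, x ^ (u - 1) * (1 - x) ^ (v - 1) =
      Real.Gamma u * Real.Gamma v / Real.Gamma (u + v) := by
  have h := Complex.Gamma_mul_Gamma_eq_betaIntegral (s := (u:ℂ)) (t := (v:ℂ))
    (by simpa using hu) (by simpa using hv)
  have hβ : Complex.betaIntegral u v =
      ((∫ x in (0:ℝ)..1, x ^ (u - 1) * (1 - x) ^ (v - 1) : ℝ) : ℂ) := by
    rw [Complex.betaIntegral, ← intervalIntegral.integral_ofReal]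
    refine intervalIntegral.integral_congr fun x hx => ?_
    rw [uIcc_of_le zero_le_one] at hx
    have e1 : ((u:ℂ) - 1) = ((u - 1 : ℝ) : ℂ) := by push_cast; ring
    have e2 : ((v:ℂ) - 1) = ((v - 1 : ℝ) : ℂ) := by push_cast; ring
    have e3 : (1 - (x:ℂ)) = ((1 - x : ℝ) : ℂ) := by push_cast; ring
    rw [e1, e2, e3, ← Complex.ofReal_cpow hx.1, ← Complex.ofReal_cpow (by linarith [hx.2] : (0:ℝ) ≤ 1 - x), ← Complex.ofReal_mul]
  rw [hβ] at h
  have h2 : ((Real.Gamma u * Real.Gamma v : ℝ) : ℂ) =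
      ((Real.Gamma (u + v) * ∫ x in (0:ℝ)..1, x ^ (u - 1) * (1 - x) ^ (v - 1) : ℝ) : ℂ) := by
    push_cast
    rw [Complex.Gamma_ofReal, Complex.Gamma_ofReal, ← Complex.ofReal_add, Complex.Gamma_ofReal] at h
    exact_mod_cast h
  have h3 := Complex.ofReal_injective h2
  have hpos : Real.Gamma (u + v) ≠ 0 := (Real.Gamma_pos_of_pos (by linarith)).ne'
  field_simp
  linarith [h3]

lemma Gamma_add_alpha_le {x α : ℝ} (hx : 0 < x) (h0 : 0 < α) (h1 : α < 1) :
    Real.Gamma (x + α) ≤ Real.Gamma x * x ^ α := by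
  have h := Real.Gamma_mul_add_mul_le_rpow_Gamma_mul_rpow_Gamma (s := x) (t := x + 1)
    (a := 1 - α) (b := α) hx (by linarith) (by linarith) h0 (by ring)
  have e : (1 - α) * x + α * (x + 1) = x + α := by ring
  rw [e, Real.Gamma_add_one hx.ne'] at h
  calc Real.Gamma (x + α) ≤ Real.Gamma x ^ (1 - α) * (x * Real.Gamma x) ^ α := h
    _ = Real.Gamma x * x ^ α := by
        rw [Real.mul_rpow hx.le (Real.Gamma_pos_of_pos hx).le,
          ← mul_assoc, mul_comm (Real.Gamma x ^ (1-α)), mul_assoc, mul_comm (Real.Gamma x ^ (1-α)),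
          ← Real.rpow_add (Real.Gamma_pos_of_pos hx)]
        ring_nf
        rw [Real.rpow_one]

lemma le_Gamma_add_alpha {x α : ℝ} (hx : 0 < x) (h0 : 0 < α) (h1 : α < 1) :
    x * Real.Gamma x ≤ Real.Gamma (x + α) * (x + α) ^ (1 - α) := by
  have hxα : 0 < x + α := by linarith
  have h := Real.Gamma_mul_add_mul_le_rpow_Gamma_mul_rpow_Gamma (s := x + α) (t := x + α + 1)
    (a := α) (b := 1 - α) hxα (by linarith) h0 (by linarith) (by ring)
  have e : α * (x + α) + (1 - α) * (x + α + 1) = x + 1 := by ring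
  rw [e, Real.Gamma_add_one hx.ne', Real.Gamma_add_one hxα.ne'] at h
  calc x * Real.Gamma x ≤ Real.Gamma (x+α) ^ α * ((x+α) * Real.Gamma (x+α)) ^ (1-α) := h
    _ = Real.Gamma (x + α) * (x + α) ^ (1 - α) := by
        rw [Real.mul_rpow hxα.le (Real.Gamma_pos_of_pos hxα).le,
          ← mul_assoc, mul_comm (Real.Gamma (x+α) ^ α), mul_assoc,
          mul_comm (Real.Gamma (x+α) ^ α), ← Real.rpow_add (Real.Gamma_pos_of_pos hxα)]
        ring_nf
        rw [Real.rpow_one]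

lemma coeff_lower {α : ℝ} (h0 : 0 < α) (h1 : α < 1) (n : ℕ) :
    Real.Gamma (2 * (n:ℝ) + 1 + α) ≤ 3 * (1 + (n:ℝ) ^ α) * Real.Gamma (2 * (n:ℝ) + 1) := by
  set x : ℝ := 2 * (n:ℝ) + 1 with hxdef
  have hx : 0 < x := by positivity
  have key : x ^ α ≤ 3 * (1 + (n:ℝ) ^ α) := by
    rcases Nat.eq_zero_or_pos n with rfl | hn
    · have hz : ((0:ℕ):ℝ) ^ α = 0 := by
        rw [Nat.cast_zero, Real.zero_rpow h0.ne']
      rw [hz, hxdef]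
      norm_num
    · have hn1 : (1:ℝ) ≤ (n:ℝ) := by exact_mod_cast hn
      have h3 : x ≤ 3 * (n:ℝ) := by rw [hxdef]; linarith
      calc x ^ α ≤ (3 * (n:ℝ)) ^ α := Real.rpow_le_rpow hx.le h3 h0.le
        _ = 3 ^ α * (n:ℝ) ^ α := Real.mul_rpow (by norm_num) (by positivity)
        _ ≤ 3 * (n:ℝ) ^ α := by
            have : (3:ℝ) ^ α ≤ 3 ^ (1:ℝ) :=
              Real.rpow_le_rpow_of_exponent_le (by norm_num) h1.le
            rw [Real.rpow_one] at this
            have := Real.rpow_nonneg (by positivity : (0:ℝ) ≤ (n:ℝ)) α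
            nlinarith
        _ ≤ 3 * (1 + (n:ℝ) ^ α) := by nlinarith
  calc Real.Gamma (x + α) ≤ Real.Gamma x * x ^ α := Gamma_add_alpha_le hx h0 h1
    _ ≤ Real.Gamma x * (3 * (1 + (n:ℝ) ^ α)) := by
        have := Real.Gamma_pos_of_pos hx
        nlinarith
    _ = 3 * (1 + (n:ℝ) ^ α) * Real.Gamma x := by ring

lemma coeff_upper {α : ℝ} (h0 : 0 < α) (h1 : α < 1) (n : ℕ) :
    Real.Gamma (2 * (n:ℝ) + 1) * (1 + (n:ℝ) ^ α) ≤ 4 * Real.Gamma (2 * (n:ℝ) + 1 + α) := by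
  set x : ℝ := 2 * (n:ℝ) + 1 with hxdef
  have hx : 0 < x := by positivity
  have hx1 : (1:ℝ) ≤ x := by rw [hxdef]; have := Nat.cast_nonneg (α := ℝ) n; linarith
  have key : (x + α) ^ (1 - α) * (1 + (n:ℝ) ^ α) ≤ 4 * x := by
    have e1 : (x + α) ^ (1 - α) ≤ 2 * x ^ (1 - α) := by
      calc (x + α) ^ (1 - α) ≤ (2 * x) ^ (1 - α) :=
            Real.rpow_le_rpow (by positivity) (by linarith) (by linarith)
        _ = 2 ^ (1 - α) * x ^ (1 - α) := Real.mul_rpow (by norm_num) hx.le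
        _ ≤ 2 * x ^ (1 - α) := by
            have h2 : (2:ℝ) ^ (1 - α) ≤ 2 ^ (1:ℝ) :=
              Real.rpow_le_rpow_of_exponent_le (by norm_num) (by linarith)
            rw [Real.rpow_one] at h2
            have := Real.rpow_nonneg hx.le (1 - α)
            nlinarith
    have e2 : 1 + (n:ℝ) ^ α ≤ 2 * x ^ α := by
      have ha : (1:ℝ) ≤ x ^ α := Real.one_le_rpow hx1 h0.le
      have hb : (n:ℝ) ^ α ≤ x ^ α :=
        Real.rpow_le_rpow (by positivity) (by rw [hxdef]; linarith) h0.le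
      linarith
    have e3 : x ^ (1 - α) * x ^ α = x := by
      rw [← Real.rpow_add hx]; simp
    have p1 : 0 ≤ (x + α) ^ (1 - α) := Real.rpow_nonneg (by positivity) _
    have p2 : 0 ≤ 1 + (n:ℝ) ^ α := by positivity
    calc (x + α) ^ (1 - α) * (1 + (n:ℝ) ^ α) ≤ (2 * x ^ (1 - α)) * (2 * x ^ α) := by
          have := Real.rpow_nonneg hx.le (1 - α)
          nlinarith
      _ = 4 * (x ^ (1 - α) * x ^ α) := by ring
      _ = 4 * x := by rw [e3]
  have h := le_Gamma_add_alpha hx h0 h1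
  have hG : 0 < Real.Gamma x := Real.Gamma_pos_of_pos hx
  have hGα : 0 < Real.Gamma (x + α) := Real.Gamma_pos_of_pos (by linarith)
  have p1 : 0 ≤ (x + α) ^ (1 - α) := Real.rpow_nonneg (by positivity) _
  -- x * Γx * (1 + n^α) ≤ Γ(x+α) (x+α)^{1-α} (1+n^α) ≤ Γ(x+α) * 4x
  have step : x * (Real.Gamma x * (1 + (n:ℝ) ^ α)) ≤ x * (4 * Real.Gamma (x + α)) := by
    have p2 : (0:ℝ) ≤ 1 + (n:ℝ) ^ α := by positivity
    have h2 := mul_le_mul_of_nonneg_right h p2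
    have h3 := mul_le_mul_of_nonneg_left key hGα.le
    nlinarith
  exact le_of_mul_le_mul_left step hx

lemma lint_eval {α : ℝ} (h0 : 0 < α) (h1 : α < 1) (n : ℕ) :
    ∫⁻ x in Set.Ioo (0:ℝ) 1, ENNReal.ofReal ((1 - x) ^ (α - 1)) * ENNReal.ofReal x ^ (2 * n)
      = ENNReal.ofReal
        (Real.Gamma (2 * (n:ℝ) + 1) * Real.Gamma α / Real.Gamma (2 * (n:ℝ) + 1 + α)) := by
  have hcong : ∀ᵐ x ∂(volume : Measure ℝ), x ∈ Set.Ioo (0:ℝ) 1 →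
      ENNReal.ofReal ((1 - x) ^ (α - 1)) * ENNReal.ofReal x ^ (2 * n)
        = ENNReal.ofReal (x ^ (2 * n) * (1 - x) ^ (α - 1)) := by
    refine ae_of_all _ fun x hx => ?_
    rw [← ENNReal.ofReal_pow hx.1.le, ← ENNReal.ofReal_mul
      (Real.rpow_nonneg (by linarith [hx.2]) _), mul_comm]
  rw [setLIntegral_congr_fun_ae measurableSet_Ioo hcong]
  have hII : IntervalIntegrable (fun x : ℝ => x ^ (2*n) * (1 - x) ^ (α - 1)) volume 0 1 := by
    have base : IntervalIntegrable (fun x : ℝ => x ^ (α - 1)) volume 0 1 :=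
      intervalIntegral.intervalIntegrable_rpow' (by linarith)
    have comp := base.comp_sub_left 1
    simp only [sub_self, sub_zero] at comp
    have := comp.continuousOn_mul (g := fun x : ℝ => x ^ (2*n))
      (by exact (continuous_pow (2*n)).continuousOn)
    exact this.symm
  have hInt : IntegrableOn (fun x : ℝ => x ^ (2*n) * (1 - x) ^ (α - 1)) (Set.Ioo 0 1) volume :=
    (intervalIntegrable_iff_integrableOn_Ioo_of_le zero_le_one).mp hII
  have hnn : 0 ≤ᵐ[volume.restrict (Set.Ioo (0:ℝ) 1)]
      fun x : ℝ => x ^ (2*n) * (1 - x) ^ (α - 1) := by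
    refine (ae_restrict_iff' measurableSet_Ioo).mpr (ae_of_all _ fun x hx => ?_)
    exact mul_nonneg (pow_nonneg hx.1.le _) (Real.rpow_nonneg (by linarith [hx.2]) _)
  rw [← ofReal_integral_eq_lintegral_ofReal hInt hnn]
  congr 1
  rw [← integral_Ioc_eq_integral_Ioo, ← intervalIntegral.integral_of_le zero_le_one]
  rw [← real_betaIntegral (u := 2 * (n:ℝ) + 1) (v := α) (by positivity) h0]
  refine intervalIntegral.integral_congr fun x hx => ?_
  have : (2 * (n:ℝ) + 1) - 1 = ((2 * n : ℕ) : ℝ) := by push_cast; ring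
  rw [this, Real.rpow_natCast]

/-- Sequence form of Theorem 2.11 for `m = 0`: for `α ∈ (0,1)`, `a : ℕ → [0,∞]` and
`f(λ) = ∑ n! λ^(2n) a n`, the Riemann--Liouville integral
`(1/Γ(α)) ∫₀¹ (1−λ)^(α−1) f(λ) dλ` equals `∑ (Γ(2n+1)/Γ(2n+1+α)) n! a n`,
and this is finite iff `∑ (n!/(1+n^α)) a n < ∞`. -/
theorem dual_Dalpha_characterization (α : ℝ) (hα : α ∈ Set.Ioo (0 : ℝ) 1) (a : ℕ → ℝ≥0∞) :
    (ENNReal.ofReal (1 / Real.Gamma α) *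
        ∫⁻ x in Set.Ioo (0 : ℝ) 1, ENNReal.ofReal ((1 - x) ^ (α - 1)) *
          ∑' n : ℕ, (n.factorial : ℝ≥0∞) * ENNReal.ofReal x ^ (2 * n) * a n) =
      (∑' n : ℕ, ENNReal.ofReal (Real.Gamma (2 * (n : ℝ) + 1) / Real.Gamma (2 * (n : ℝ) + 1 + α)) *
        (n.factorial : ℝ≥0∞) * a n) ∧
    ((ENNReal.ofReal (1 / Real.Gamma α) *
        ∫⁻ x in Set.Ioo (0 : ℝ) 1, ENNReal.ofReal ((1 - x) ^ (α - 1)) *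
          ∑' n : ℕ, (n.factorial : ℝ≥0∞) * ENNReal.ofReal x ^ (2 * n) * a n) < ⊤ ↔
      (∑' n : ℕ, (n.factorial : ℝ≥0∞) / (1 + ENNReal.ofReal ((n : ℝ) ^ α)) * a n) < ⊤) := by
  obtain ⟨hα0, hα1⟩ := hα
  have hΓα : 0 < Real.Gamma α := Real.Gamma_pos_of_pos hα0
  have hΓn : ∀ n : ℕ, 0 < Real.Gamma (2 * (n:ℝ) + 1) := fun n =>
    Real.Gamma_pos_of_pos (by positivity)
  have hΓnα : ∀ n : ℕ, 0 < Real.Gamma (2 * (n:ℝ) + 1 + α) := fun n =>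
    Real.Gamma_pos_of_pos (by positivity)
  have hCpos : ∀ n : ℕ, (0:ℝ) < 1 + (n:ℝ) ^ α := fun n => by positivity
  have m1 : Measurable fun x : ℝ => ENNReal.ofReal ((1 - x) ^ (α - 1)) :=
    ((measurable_const.sub measurable_id).pow measurable_const).ennreal_ofReal
  have m2 : ∀ n : ℕ, Measurable fun x : ℝ => ENNReal.ofReal x ^ (2 * n) := fun n =>
    ENNReal.measurable_ofReal.pow_const _
  -- the main equality
  have heq : (ENNReal.ofReal (1 / Real.Gamma α) *
        ∫⁻ x in Set.Ioo (0 : ℝ) 1, ENNReal.ofReal ((1 - x) ^ (α - 1)) *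
          ∑' n : ℕ, (n.factorial : ℝ≥0∞) * ENNReal.ofReal x ^ (2 * n) * a n) =
      (∑' n : ℕ, ENNReal.ofReal (Real.Gamma (2 * (n : ℝ) + 1) / Real.Gamma (2 * (n : ℝ) + 1 + α)) *
        (n.factorial : ℝ≥0∞) * a n) := by
    have step1 : (∫⁻ x in Set.Ioo (0 : ℝ) 1, ENNReal.ofReal ((1 - x) ^ (α - 1)) *
          ∑' n : ℕ, (n.factorial : ℝ≥0∞) * ENNReal.ofReal x ^ (2 * n) * a n) =
        ∑' n : ℕ, (n.factorial : ℝ≥0∞) * a n *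
          ENNReal.ofReal
            (Real.Gamma (2 * (n:ℝ) + 1) * Real.Gamma α / Real.Gamma (2 * (n:ℝ) + 1 + α)) := by
      calc (∫⁻ x in Set.Ioo (0 : ℝ) 1, ENNReal.ofReal ((1 - x) ^ (α - 1)) *
              ∑' n : ℕ, (n.factorial : ℝ≥0∞) * ENNReal.ofReal x ^ (2 * n) * a n)
          = ∫⁻ x in Set.Ioo (0 : ℝ) 1, ∑' n : ℕ, ENNReal.ofReal ((1 - x) ^ (α - 1)) *
              ((n.factorial : ℝ≥0∞) * ENNReal.ofReal x ^ (2 * n) * a n) := by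
            refine lintegral_congr fun x => ?_
            exact ENNReal.tsum_mul_left.symm
        _ = ∑' n : ℕ, ∫⁻ x in Set.Ioo (0 : ℝ) 1, ENNReal.ofReal ((1 - x) ^ (α - 1)) *
              ((n.factorial : ℝ≥0∞) * ENNReal.ofReal x ^ (2 * n) * a n) := by
            refine lintegral_tsum fun n => ?_
            exact (m1.mul ((measurable_const.mul (m2 n)).mul measurable_const)).aemeasurable
        _ = ∑' n : ℕ, (n.factorial : ℝ≥0∞) * a n *
              ENNReal.ofReal
                (Real.Gamma (2 * (n:ℝ) + 1) * Real.Gamma α /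
                  Real.Gamma (2 * (n:ℝ) + 1 + α)) := by
            refine tsum_congr fun n => ?_
            have hfun : ∀ x : ℝ, ENNReal.ofReal ((1 - x) ^ (α - 1)) *
                ((n.factorial : ℝ≥0∞) * ENNReal.ofReal x ^ (2 * n) * a n) =
                ((n.factorial : ℝ≥0∞) * a n) *
                  (ENNReal.ofReal ((1 - x) ^ (α - 1)) * ENNReal.ofReal x ^ (2 * n)) := by
              intro x; ring
            simp_rw [hfun]
            rw [lintegral_const_mul (f := fun x => ENNReal.ofReal ((1 - x) ^ (α - 1)) * ENNReal.ofReal x ^ (2 * n)) _ (m1.mul (m2 n)), lint_eval hα0 hα1 n]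
    rw [step1, ← ENNReal.tsum_mul_left]
    refine tsum_congr fun n => ?_
    rw [← mul_assoc]
    have : ENNReal.ofReal (1 / Real.Gamma α) * ((n.factorial : ℝ≥0∞) * a n) *
          ENNReal.ofReal
            (Real.Gamma (2 * (n:ℝ) + 1) * Real.Gamma α / Real.Gamma (2 * (n:ℝ) + 1 + α)) =
        (ENNReal.ofReal (1 / Real.Gamma α) *
          ENNReal.ofReal
            (Real.Gamma (2 * (n:ℝ) + 1) * Real.Gamma α / Real.Gamma (2 * (n:ℝ) + 1 + α))) *
          (n.factorial : ℝ≥0∞) * a n := by ring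
    rw [this, ← ENNReal.ofReal_mul (by positivity)]
    congr 2
    field_simp
  refine ⟨heq, ?_⟩
  rw [heq]
  -- finiteness
  set S := ∑' n : ℕ, ENNReal.ofReal (Real.Gamma (2 * (n : ℝ) + 1) /
      Real.Gamma (2 * (n : ℝ) + 1 + α)) * (n.factorial : ℝ≥0∞) * a n with hS
  set T := ∑' n : ℕ, (n.factorial : ℝ≥0∞) / (1 + ENNReal.ofReal ((n : ℝ) ^ α)) * a n with hT
  have hTform : T = ∑' n : ℕ, ENNReal.ofReal ((1 + (n:ℝ) ^ α)⁻¹) * (n.factorial : ℝ≥0∞) * a n := by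
    refine tsum_congr fun n => ?_
    rw [show (1:ℝ≥0∞) + ENNReal.ofReal ((n:ℝ)^α) = ENNReal.ofReal (1 + (n:ℝ)^α) by
        rw [ENNReal.ofReal_add (by norm_num) (Real.rpow_nonneg (Nat.cast_nonneg n) α),
          ENNReal.ofReal_one],
      div_eq_mul_inv, ← ENNReal.ofReal_inv_of_pos (hCpos n)]
    ring
  have hST : S ≤ ENNReal.ofReal 4 * T := by
    rw [hTform, ← ENNReal.tsum_mul_left]
    refine ENNReal.tsum_le_tsum fun n => ?_
    have hr : Real.Gamma (2 * (n:ℝ) + 1) / Real.Gamma (2 * (n:ℝ) + 1 + α) ≤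
        4 * (1 + (n:ℝ) ^ α)⁻¹ := by
      rw [show (4:ℝ) * (1 + (n:ℝ)^α)⁻¹ = 4 / (1 + (n:ℝ)^α) by rw [div_eq_mul_inv],
        div_le_div_iff₀ (hΓnα n) (hCpos n)]
      exact coeff_upper hα0 hα1 n
    calc ENNReal.ofReal (Real.Gamma (2 * (n : ℝ) + 1) / Real.Gamma (2 * (n : ℝ) + 1 + α)) *
          (n.factorial : ℝ≥0∞) * a n
        ≤ ENNReal.ofReal (4 * (1 + (n:ℝ) ^ α)⁻¹) * (n.factorial : ℝ≥0∞) * a n := by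
          exact mul_le_mul_left (mul_le_mul_left (ENNReal.ofReal_le_ofReal hr) _) _
      _ = ENNReal.ofReal 4 * (ENNReal.ofReal ((1 + (n:ℝ) ^ α)⁻¹) *
            (n.factorial : ℝ≥0∞) * a n) := by
          rw [ENNReal.ofReal_mul (by norm_num)]; ring
  have hTS : T ≤ ENNReal.ofReal 3 * S := by
    rw [hTform, hS, ← ENNReal.tsum_mul_left]
    refine ENNReal.tsum_le_tsum fun n => ?_
    have hr : (1 + (n:ℝ) ^ α)⁻¹ ≤
        3 * (Real.Gamma (2 * (n:ℝ) + 1) / Real.Gamma (2 * (n:ℝ) + 1 + α)) := by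
      rw [show (3:ℝ) * (Real.Gamma (2 * (n:ℝ) + 1) / Real.Gamma (2 * (n:ℝ) + 1 + α)) =
          (3 * Real.Gamma (2 * (n:ℝ) + 1)) / Real.Gamma (2 * (n:ℝ) + 1 + α) by ring,
        inv_eq_one_div, div_le_div_iff₀ (hCpos n) (hΓnα n)]
      nlinarith [coeff_lower hα0 hα1 n]
    calc ENNReal.ofReal ((1 + (n:ℝ) ^ α)⁻¹) * (n.factorial : ℝ≥0∞) * a n
        ≤ ENNReal.ofReal (3 * (Real.Gamma (2 * (n:ℝ) + 1) /
            Real.Gamma (2 * (n:ℝ) + 1 + α))) * (n.factorial : ℝ≥0∞) * a n := by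
          exact mul_le_mul_left (mul_le_mul_left (ENNReal.ofReal_le_ofReal hr) _) _
      _ = ENNReal.ofReal 3 * (ENNReal.ofReal (Real.Gamma (2 * (n:ℝ) + 1) /
            Real.Gamma (2 * (n:ℝ) + 1 + α)) * (n.factorial : ℝ≥0∞) * a n) := by
          rw [ENNReal.ofReal_mul (by norm_num)]; ring
  constructor
  · intro h
    exact lt_of_le_of_lt hTS (ENNReal.mul_lt_top ENNReal.ofReal_lt_top h)
  · intro h
    exact lt_of_le_of_lt hST (ENNReal.mul_lt_top ENNReal.ofReal_lt_top h)
end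

section
/- Let α ∈ (0,1). Let a : ℕ → ℝ satisfy a(n) ≥ 0 for all n and ∑_{n=0}^∞ n!·a(n) < ∞ (summable). Define f : ℝ → ℝ by f(λ) = ∑_{n=0}^∞ n!·λ^(2n)·a(n). Then for every λ ∈ (0,1), the Riemann–Liouville fractional derivative of f of order α at λ satisfies D^α_{0+}f(λ) = ∑_{n=0}^∞ (Γ(2n+1)/Γ(2n+1−α))·n!·λ^(2n−α)·a(n). -/
open Real MeasureTheory

lemma rl_beta_eval {α : ℝ} (hα0 : 0 < α) (hα1 : α < 1) (n : ℕ) {x : ℝ} (hx : 0 < x) :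
    ∫ t in (0:ℝ)..x, t ^ (2*n) * (x - t) ^ (-α) =
      (Real.Gamma (2*(n:ℝ)+1) * Real.Gamma (1-α) / Real.Gamma (2*(n:ℝ)+2-α)) *
        x ^ (2*(n:ℝ)+1-α) := by
  set u : ℂ := ((2*(n:ℝ)+1 : ℝ) : ℂ) with hu_def
  set v : ℂ := ((1-α : ℝ) : ℂ) with hv_def
  have hu : 0 < u.re := by simp [hu_def]; positivity
  have hv : 0 < v.re := by simp [hv_def]; linarith
  have huv : u + v = ((2*(n:ℝ)+2-α : ℝ) : ℂ) := by rw [hu_def, hv_def]; push_cast; ring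
  have huv1 : u + v - 1 = ((2*(n:ℝ)+1-α : ℝ) : ℂ) := by rw [huv]; push_cast; ring
  have hGuv : Complex.Gamma (u+v) ≠ 0 := by
    rw [huv, Complex.Gamma_ofReal]
    exact_mod_cast (Real.Gamma_pos_of_pos (by have := Nat.cast_nonneg (α := ℝ) n; linarith : (0:ℝ) < 2*(n:ℝ)+2-α)).ne'
  have hbeta : Complex.betaIntegral u v = Complex.Gamma u * Complex.Gamma v / Complex.Gamma (u+v) := by
    rw [Complex.Gamma_mul_Gamma_eq_betaIntegral hu hv]
    field_simp
  have key := Complex.betaIntegral_scaled u v hx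
  have hint : (((∫ t in (0:ℝ)..x, t ^ (2*n) * (x - t) ^ (-α)) : ℝ) : ℂ)
      = ∫ t in (0:ℝ)..x, (t:ℂ)^(u-1) * ((x:ℂ)-t)^(v-1) := by
    rw [← intervalIntegral.integral_ofReal]
    apply intervalIntegral.integral_congr
    intro t ht
    rw [Set.uIcc_of_le hx.le] at ht
    have ht0 : (0:ℝ) ≤ t := ht.1
    have htx : (0:ℝ) ≤ x - t := sub_nonneg.2 ht.2
    have e1 : u - 1 = ((2*(n:ℝ) : ℝ) : ℂ) := by rw [hu_def]; push_cast; ring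
    have e2 : v - 1 = ((-α : ℝ) : ℂ) := by rw [hv_def]; push_cast; ring
    have e3 : (t:ℝ) ^ (2*n) = t ^ ((2*(n:ℝ)) : ℝ) := by
      rw [← Real.rpow_natCast t (2*n)]; push_cast; ring_nf
    have e4 : (x:ℂ) - (t:ℂ) = ((x - t : ℝ) : ℂ) := by push_cast; ring
    simp only [e1, e2, e3, e4, Complex.ofReal_mul,
      Complex.ofReal_cpow ht0, Complex.ofReal_cpow htx]
  have hxc : (x:ℂ) ^ (u + v - 1) = ((x ^ (2*(n:ℝ)+1-α) : ℝ) : ℂ) := by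
    rw [huv1, Complex.ofReal_cpow hx.le]
  apply Complex.ofReal_injective
  rw [hint, key, hbeta, hxc, hu_def, hv_def, huv, Complex.Gamma_ofReal,
    Complex.Gamma_ofReal, Complex.Gamma_ofReal]
  push_cast
  ring

lemma rl_intble {α : ℝ} (hα0 : 0 < α) (hα1 : α < 1) (n : ℕ) {x : ℝ} (hx : 0 < x) :
    IntervalIntegrable (fun t => t ^ (2*n) * (x - t) ^ (-α)) volume 0 x := by
  have h0 : IntervalIntegrable (fun t : ℝ => t ^ (-α)) volume 0 x :=
    intervalIntegral.intervalIntegrable_rpow' (by linarith)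
  have h1 := (h0.comp_sub_left x).symm
  simp only [sub_zero, sub_self] at h1
  exact h1.continuousOn_mul (Continuous.continuousOn (by continuity))

lemma rl_ratio_le {α : ℝ} (hα0 : 0 < α) (hα1 : α < 1) (n : ℕ) :
    Real.Gamma (2*(n:ℝ)+1) / Real.Gamma (2*(n:ℝ)+2-α) ≤ 1/Real.Gamma (2-α) + 1 := by
  have hKpos : 0 < Real.Gamma (2-α) := Real.Gamma_pos_of_pos (by linarith)
  rcases n with _ | m
  · norm_num [Real.Gamma_one]
  · have hmn : (0:ℝ) ≤ (m:ℝ) := Nat.cast_nonneg m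
    have hc : ((m+1 : ℕ) : ℝ) = (m:ℝ) + 1 := by push_cast; ring
    rw [hc]
    have h2 : (2:ℝ) ≤ 2*((m:ℝ)+1)+1 := by linarith
    have hle : Real.Gamma (2*((m:ℝ)+1)+1) ≤ Real.Gamma (2*((m:ℝ)+1)+2-α) := by
      apply (Real.Gamma_strictMonoOn_Ici.monotoneOn) (by simpa using h2)
        (by simp only [Set.mem_Ici]; linarith) (by linarith)
    have hpos : 0 < Real.Gamma (2*((m:ℝ)+1)+2-α) := Real.Gamma_pos_of_pos (by linarith)
    have : Real.Gamma (2*((m:ℝ)+1)+1) / Real.Gamma (2*((m:ℝ)+1)+2-α) ≤ 1 :=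
      (div_le_one hpos).2 hle
    have : (0:ℝ) ≤ 1/Real.Gamma (2-α) := by positivity
    linarith [(div_le_one hpos).2 hle]

lemma rl_series_rep {α : ℝ} (hα0 : 0 < α) (hα1 : α < 1)
    (a : ℕ → ℝ) (ha : ∀ n, 0 ≤ a n)
    (hsum : Summable fun n => (n.factorial : ℝ) * a n)
    (f : ℝ → ℝ) (hf : ∀ x : ℝ, f x = ∑' n : ℕ, (n.factorial : ℝ) * x ^ (2 * n) * a n)
    {x : ℝ} (hx0 : 0 < x) (hx1 : x < 1) :
    ∫ t in (0:ℝ)..x, f t * (x - t) ^ (-α) =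
      ∑' n : ℕ, ((n.factorial : ℝ) * a n *
        (Real.Gamma (2*(n:ℝ)+1) * Real.Gamma (1-α) / Real.Gamma (2*(n:ℝ)+2-α))) *
        x ^ (2*(n:ℝ)+1-α) := by
  set μ := volume.restrict (Set.Ioc (0:ℝ) x) with hμ
  set g : ℕ → ℝ → ℝ :=
    fun n t => ((n.factorial:ℝ) * a n) * (t ^ (2*n) * (x - t) ^ (-α)) with hg
  -- each g n is integrable on Ioc 0 x
  have hint : ∀ n, IntegrableOn (g n) (Set.Ioc (0:ℝ) x) volume := fun n => by
    have := ((rl_intble hα0 hα1 n hx0).const_mul ((n.factorial:ℝ) * a n))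
    rwa [intervalIntegrable_iff_integrableOn_Ioc_of_le hx0.le] at this
  -- nonnegativity on Ioc
  have hnn : ∀ n, ∀ t ∈ Set.Ioc (0:ℝ) x, 0 ≤ g n t := fun n t ht => by
    have h1 : (0:ℝ) ≤ t := ht.1.le
    have h2 : (0:ℝ) ≤ x - t := sub_nonneg.2 ht.2
    have := ha n
    positivity
  have hKnn : (0:ℝ) ≤ 1/Real.Gamma (2-α) + 1 := by
    have := Real.Gamma_pos_of_pos (by linarith : (0:ℝ) < 2-α); positivity
  have hG1 : (0:ℝ) < Real.Gamma (1-α) := Real.Gamma_pos_of_pos (by linarith)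
  set w : ℕ → ℝ := fun n => ((n.factorial:ℝ) * a n) *
      ((Real.Gamma (2*(n:ℝ)+1) * Real.Gamma (1-α) / Real.Gamma (2*(n:ℝ)+2-α)) *
        x ^ (2*(n:ℝ)+1-α)) with hw
  -- value of each integral
  have hval : ∀ n, ∫ t, g n t ∂μ = w n := fun n => by
    rw [hμ, ← intervalIntegral.integral_of_le hx0.le]
    simp only [hg, hw]
    rw [intervalIntegral.integral_const_mul, rl_beta_eval hα0 hα1 n hx0]
  have hwnn : ∀ n, 0 ≤ w n := fun n => by
    have h1 := Real.Gamma_pos_of_pos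
      (by have := Nat.cast_nonneg (α := ℝ) n; linarith : (0:ℝ) < 2*(n:ℝ)+1)
    have h2 := Real.Gamma_pos_of_pos
      (by have := Nat.cast_nonneg (α := ℝ) n; linarith : (0:ℝ) < 2*(n:ℝ)+2-α)
    have h3 : (0:ℝ) ≤ x ^ (2*(n:ℝ)+1-α) := Real.rpow_nonneg hx0.le _
    have h4 := ha n
    have h5 : (0:ℝ) ≤ (n.factorial : ℝ) := Nat.cast_nonneg _
    positivity
  have hwsum : Summable w := by
    apply Summable.of_nonneg_of_le hwnn
      (f := fun n => (((1/Real.Gamma (2-α) + 1) * Real.Gamma (1-α) * x ^ (1-α))) *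
        ((n.factorial:ℝ) * a n))
    · intro n
      have hxp : x ^ (2*(n:ℝ)+1-α) ≤ x ^ (1-α) := by
        have : x ^ (2*(n:ℝ)+1-α) = x ^ (2*n) * x ^ (1-α) := by
          rw [← Real.rpow_natCast x (2*n), ← Real.rpow_add hx0]
          congr 1; push_cast; ring
        rw [this]
        have h1 : x ^ (2*n) ≤ 1 := pow_le_one₀ hx0.le hx1.le
        have h2 : (0:ℝ) ≤ x ^ (1-α) := Real.rpow_nonneg hx0.le _
        nlinarith
      have hr := rl_ratio_le hα0 hα1 n
      have h5 : (0:ℝ) ≤ (n.factorial : ℝ) * a n := by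
        have := ha n; positivity
      have h3 : (0:ℝ) ≤ x ^ (2*(n:ℝ)+1-α) := Real.rpow_nonneg hx0.le _
      have hq : Real.Gamma (2*(n:ℝ)+1) * Real.Gamma (1-α) / Real.Gamma (2*(n:ℝ)+2-α) *
          x ^ (2*(n:ℝ)+1-α) ≤ (1/Real.Gamma (2-α) + 1) * Real.Gamma (1-α) * x ^ (1-α) := by
        have e : Real.Gamma (2*(n:ℝ)+1) * Real.Gamma (1-α) / Real.Gamma (2*(n:ℝ)+2-α)
            = (Real.Gamma (2*(n:ℝ)+1) / Real.Gamma (2*(n:ℝ)+2-α)) * Real.Gamma (1-α) := by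
          ring
        rw [e]
        have hrat_nn : (0:ℝ) ≤ Real.Gamma (2*(n:ℝ)+1) / Real.Gamma (2*(n:ℝ)+2-α) := by
          have h1 := Real.Gamma_pos_of_pos
            (by have := Nat.cast_nonneg (α := ℝ) n; linarith : (0:ℝ) < 2*(n:ℝ)+1)
          have h2 := Real.Gamma_pos_of_pos
            (by have := Nat.cast_nonneg (α := ℝ) n; linarith : (0:ℝ) < 2*(n:ℝ)+2-α)
          positivity
        calc Real.Gamma (2*(n:ℝ)+1) / Real.Gamma (2*(n:ℝ)+2-α) * Real.Gamma (1-α) *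
              x ^ (2*(n:ℝ)+1-α)
            ≤ (1/Real.Gamma (2-α) + 1) * Real.Gamma (1-α) * x ^ (2*(n:ℝ)+1-α) := by
              apply mul_le_mul_of_nonneg_right _ h3
              exact mul_le_mul_of_nonneg_right hr hG1.le
          _ ≤ (1/Real.Gamma (2-α) + 1) * Real.Gamma (1-α) * x ^ (1-α) := by
              apply mul_le_mul_of_nonneg_left hxp (by positivity)
      calc w n ≤ ((n.factorial:ℝ) * a n) *
            ((1/Real.Gamma (2-α) + 1) * Real.Gamma (1-α) * x ^ (1-α)) :=
              mul_le_mul_of_nonneg_left hq h5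
        _ = _ := by ring
    · exact hsum.mul_left _
  -- the swap
  have hswap : ∫ t, (∑' n, g n t) ∂μ = ∑' n, ∫ t, g n t ∂μ := by
    apply MeasureTheory.integral_tsum
    · intro n
      exact (hint n).aestronglyMeasurable
    · rw [ne_eq]
      have hlint : ∀ n, ∫⁻ t, ‖g n t‖ₑ ∂μ = ENNReal.ofReal (w n) := fun n => by
        rw [← ofReal_integral_norm_eq_lintegral_enorm (hint n)]
        congr 1
        have hnorm : ∫ t, ‖g n t‖ ∂μ = ∫ t, g n t ∂μ := by
          apply integral_congr_ae
          rw [hμ]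
          filter_upwards [ae_restrict_mem measurableSet_Ioc] with t ht
          rw [Real.norm_eq_abs, abs_of_nonneg (hnn n t ht)]
        rw [hnorm, hval n]
      simp only [hlint]
      rw [← ENNReal.ofReal_tsum_of_nonneg hwnn hwsum]
      exact ENNReal.ofReal_ne_top
  -- put everything together
  rw [intervalIntegral.integral_of_le hx0.le]
  have hpt : ∀ t : ℝ, f t * (x - t) ^ (-α) = ∑' n, g n t := fun t => by
    rw [hf t, ← tsum_mul_right]
    exact tsum_congr fun n => by rw [hg]; ring
  calc ∫ t in Set.Ioc (0:ℝ) x, f t * (x - t) ^ (-α)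
      = ∫ t, (∑' n, g n t) ∂μ := by
        rw [hμ]; exact integral_congr_ae (Filter.Eventually.of_forall fun t => hpt t)
    _ = ∑' n, ∫ t, g n t ∂μ := hswap
    _ = _ := tsum_congr fun n => by rw [hval n]; simp only [hw]; ring

/-- For `α ∈ (0,1)`, `a ≥ 0` with `∑ n! a n < ∞` and `f(λ) = ∑ n! λ^(2n) a n`, the
Riemann--Liouville fractional derivative of `f` of order `α` at `λ ∈ (0,1)` is
`∑ (Γ(2n+1)/Γ(2n+1−α)) n! λ^(2n−α) a n`. -/
theorem rl_deriv_bargmann_segal_series (α : ℝ) (hα : α ∈ Set.Ioo (0 : ℝ) 1)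
    (a : ℕ → ℝ) (ha : ∀ n, 0 ≤ a n)
    (hsum : Summable fun n => (n.factorial : ℝ) * a n)
    (f : ℝ → ℝ) (hf : ∀ x : ℝ, f x = ∑' n : ℕ, (n.factorial : ℝ) * x ^ (2 * n) * a n)
    (l : ℝ) (hl : l ∈ Set.Ioo (0 : ℝ) 1) :
    (1 / Real.Gamma (1 - α)) *
        deriv (fun x : ℝ => ∫ t in (0 : ℝ)..x, f t * (x - t) ^ (-α)) l =
      ∑' n : ℕ, (Real.Gamma (2 * (n : ℝ) + 1) / Real.Gamma (2 * (n : ℝ) + 1 - α)) *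
        (n.factorial : ℝ) * l ^ (2 * (n : ℝ) - α) * a n := by
  obtain ⟨hα0, hα1⟩ := hα
  obtain ⟨hl0, hl1⟩ := hl
  set δ : ℝ := l/2 with hδ_def
  set r : ℝ := (1+l)/2 with hr_def
  have hδ0 : 0 < δ := by rw [hδ_def]; linarith
  have hδl : δ < l := by rw [hδ_def]; linarith
  have hlr : l < r := by rw [hr_def]; linarith
  have hr1 : r < 1 := by rw [hr_def]; linarith
  have hr0 : 0 < r := lt_trans (lt_trans hδ0 hδl) hlr
  have hls : l ∈ Set.Ioo δ r := ⟨hδl, hlr⟩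
  have hG1 : 0 < Real.Gamma (1-α) := Real.Gamma_pos_of_pos (by linarith)
  set K : ℝ := 1/Real.Gamma (2-α) + 1 with hK_def
  have hK0 : 0 ≤ K := by
    have := Real.Gamma_pos_of_pos (by linarith : (0:ℝ) < 2-α)
    rw [hK_def]; positivity
  set M : ℝ := ∑' n : ℕ, (n.factorial : ℝ) * a n with hM_def
  have hfa_nn : ∀ n : ℕ, 0 ≤ (n.factorial : ℝ) * a n := fun n => by
    have := ha n; positivity
  have hM : ∀ n : ℕ, (n.factorial : ℝ) * a n ≤ M := fun n =>
    Summable.le_tsum hsum n fun i _ => hfa_nn i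
  have hM0 : 0 ≤ M := le_trans (hfa_nn 0) (hM 0)
  set c : ℕ → ℝ := fun n => (n.factorial : ℝ) * a n *
    (Real.Gamma (2*(n:ℝ)+1) * Real.Gamma (1-α) / Real.Gamma (2*(n:ℝ)+2-α)) with hc_def
  have hGa : ∀ n : ℕ, 0 < Real.Gamma (2*(n:ℝ)+1) := fun n =>
    Real.Gamma_pos_of_pos (by have := Nat.cast_nonneg (α := ℝ) n; linarith)
  have hGb : ∀ n : ℕ, 0 < Real.Gamma (2*(n:ℝ)+2-α) := fun n =>
    Real.Gamma_pos_of_pos (by have := Nat.cast_nonneg (α := ℝ) n; linarith)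
  have hcnn : ∀ n, 0 ≤ c n := fun n => by
    have h1 := hGa n; have h2 := hGb n; have h3 := hfa_nn n
    rw [hc_def]; positivity
  have hcle : ∀ n, c n ≤ K * Real.Gamma (1-α) * M := fun n => by
    have h1 := rl_ratio_le hα0 hα1 n
    have h2 := hfa_nn n
    have h3 := hM n
    have e : c n = ((n.factorial : ℝ) * a n) *
        ((Real.Gamma (2*(n:ℝ)+1) / Real.Gamma (2*(n:ℝ)+2-α)) * Real.Gamma (1-α)) := by
      rw [hc_def]; ring
    rw [e]
    calc ((n.factorial : ℝ) * a n) *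
          ((Real.Gamma (2*(n:ℝ)+1) / Real.Gamma (2*(n:ℝ)+2-α)) * Real.Gamma (1-α))
        ≤ ((n.factorial : ℝ) * a n) * (K * Real.Gamma (1-α)) := by
          apply mul_le_mul_of_nonneg_left _ h2
          exact mul_le_mul_of_nonneg_right h1 hG1.le
      _ ≤ M * (K * Real.Gamma (1-α)) := by
          apply mul_le_mul_of_nonneg_right h3 (by positivity)
      _ = K * Real.Gamma (1-α) * M := by ring
  -- the series of functions and its derivative series
  set g : ℕ → ℝ → ℝ := fun n y => c n * y ^ (2*(n:ℝ)+1-α) with hg_def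
  set g' : ℕ → ℝ → ℝ := fun n y => c n * ((2*(n:ℝ)+1-α) * y ^ (2*(n:ℝ)+1-α-1)) with hg'_def
  set u : ℕ → ℝ := fun n => c n * ((2*(n:ℝ)+1-α) * (r^(2*n) * δ^(-α))) with hu_def
  have hq1 : r^2 < 1 := by nlinarith
  have hgeom : Summable (fun n : ℕ => (2*(n:ℝ)+1) * (r^2)^n) := by
    have h1 : Summable (fun n : ℕ => (n:ℝ)^1 * (r^2)^n) :=
      summable_pow_mul_geometric_of_norm_lt_one 1 (by rw [Real.norm_eq_abs, abs_of_nonneg (by positivity)]; exact hq1)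
    have h2 : Summable (fun n : ℕ => (r^2)^n) := summable_geometric_of_lt_one (by positivity) hq1
    apply Summable.congr ((h1.mul_left 2).add h2)
    intro n; push_cast; ring
  have husum : Summable u := by
    have hunn : ∀ n, 0 ≤ u n := by
      intro n
      have h1 := hcnn n
      have h2 : (0:ℝ) ≤ 2*(n:ℝ)+1-α := by
        have := Nat.cast_nonneg (α := ℝ) n; linarith
      have h3 : (0:ℝ) ≤ r^(2*n) := by positivity
      have h4 : (0:ℝ) ≤ δ^(-α) := Real.rpow_nonneg hδ0.le _
      rw [hu_def]; positivity
    have hule : ∀ n, u n ≤ (K * Real.Gamma (1-α) * M * δ^(-α)) * ((2*(n:ℝ)+1) * (r^2)^n) := by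
      intro n
      have h2 : (2*(n:ℝ)+1-α) ≤ 2*(n:ℝ)+1 := by linarith
      have h4 : (0:ℝ) ≤ δ^(-α) := Real.rpow_nonneg hδ0.le _
      have key : u n ≤ (K * Real.Gamma (1-α) * M) * ((2*(n:ℝ)+1) * (r^(2*n) * δ^(-α))) := by
        rw [hu_def]
        apply mul_le_mul (hcle n) _ _ (by positivity)
        · apply mul_le_mul_of_nonneg_right h2 (by positivity)
        · have h2' : (0:ℝ) ≤ 2*(n:ℝ)+1-α := by
            have := Nat.cast_nonneg (α := ℝ) n; linarith
          positivity
      calc u n ≤ (K * Real.Gamma (1-α) * M) * ((2*(n:ℝ)+1) * (r^(2*n) * δ^(-α))) := key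
        _ = (K * Real.Gamma (1-α) * M * δ^(-α)) * ((2*(n:ℝ)+1) * (r^2)^n) := by
            rw [pow_mul]; ring
    exact Summable.of_nonneg_of_le hunn hule (hgeom.mul_left _)
  have hg : ∀ (n : ℕ) (y : ℝ), y ∈ Set.Ioo δ r → HasDerivAt (g n) (g' n y) y := by
    intro n y hy
    have hy0 : y ≠ 0 := (lt_trans hδ0 hy.1).ne'
    exact (Real.hasDerivAt_rpow_const (Or.inl hy0)).const_mul (c n)
  have hg' : ∀ (n : ℕ) (y : ℝ), y ∈ Set.Ioo δ r → ‖g' n y‖ ≤ u n := by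
    intro n y hy
    have hy0 : 0 < y := lt_trans hδ0 hy.1
    have he : (2*(n:ℝ)+1-α-1) = ((2*n : ℕ) : ℝ) + (-α) := by push_cast; ring
    have hsplit : y ^ (2*(n:ℝ)+1-α-1) = y^(2*n) * y^(-α) := by
      rw [he, Real.rpow_add hy0, Real.rpow_natCast]
    have h2 : (0:ℝ) ≤ 2*(n:ℝ)+1-α := by
      have := Nat.cast_nonneg (α := ℝ) n; linarith
    have hb1 : y^(2*n) ≤ r^(2*n) := pow_le_pow_left₀ hy0.le hy.2.le _
    have hb2 : y^(-α) ≤ δ^(-α) :=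
      Real.rpow_le_rpow_of_nonpos hδ0 hy.1.le (neg_nonpos.2 hα0.le)
    have hnn : 0 ≤ g' n y := by
      have := hcnn n
      have h5 : (0:ℝ) ≤ y ^ (2*(n:ℝ)+1-α-1) := Real.rpow_nonneg hy0.le _
      rw [hg'_def]; positivity
    rw [Real.norm_eq_abs, abs_of_nonneg hnn, hg'_def, hu_def]
    simp only []
    apply mul_le_mul_of_nonneg_left _ (hcnn n)
    apply mul_le_mul_of_nonneg_left _ h2
    rw [hsplit]
    apply mul_le_mul hb1 hb2 (Real.rpow_nonneg hy0.le _) (by positivity)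
  have hg0 : Summable (fun n => g n l) := by
    have hgnn : ∀ n, 0 ≤ g n l := by
      intro n
      have h1 := hcnn n
      have h2 : (0:ℝ) ≤ l ^ (2*(n:ℝ)+1-α) := Real.rpow_nonneg hl0.le _
      rw [hg_def]; positivity
    have hgle : ∀ n, g n l ≤ (K * Real.Gamma (1-α) * M * l^(1-α)) * (l^2)^n := by
      intro n
      have hsplit : l ^ (2*(n:ℝ)+1-α) = l^(2*n) * l^(1-α) := by
        rw [show (2*(n:ℝ)+1-α) = ((2*n : ℕ) : ℝ) + (1-α) by push_cast; ring,
          Real.rpow_add hl0, Real.rpow_natCast]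
      have h2 : (0:ℝ) ≤ l ^ ((1:ℝ)-α) := Real.rpow_nonneg hl0.le _
      calc g n l = c n * (l^(2*n) * l^(1-α)) := by rw [hg_def]; simp only []; rw [hsplit]
        _ ≤ (K * Real.Gamma (1-α) * M) * (l^(2*n) * l^(1-α)) := by
            apply mul_le_mul_of_nonneg_right (hcle n) (by positivity)
        _ = (K * Real.Gamma (1-α) * M * l^(1-α)) * (l^2)^n := by rw [pow_mul]; ring
    exact Summable.of_nonneg_of_le hgnn hgle
      (Summable.mul_left _ (summable_geometric_of_lt_one (by positivity) (by nlinarith)))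
  have hd : HasDerivAt (fun z => ∑' n, g n z) (∑' n, g' n l) l :=
    hasDerivAt_tsum_of_isPreconnected husum isOpen_Ioo isPreconnected_Ioo hg hg' hls hg0 hls
  have hF : (fun x : ℝ => ∫ t in (0:ℝ)..x, f t * (x - t) ^ (-α)) =ᶠ[nhds l]
      (fun z => ∑' n, g n z) := by
    filter_upwards [isOpen_Ioo.mem_nhds hls] with x hx
    have hx0 : 0 < x := lt_trans hδ0 hx.1
    have hx1 : x < 1 := lt_trans hx.2 hr1
    rw [rl_series_rep hα0 hα1 a ha hsum f hf hx0 hx1]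
  rw [hF.deriv_eq, hd.deriv, ← tsum_mul_left]
  apply tsum_congr
  intro n
  have hpos : (0:ℝ) < 2*(n:ℝ)+1-α := by
    have := Nat.cast_nonneg (α := ℝ) n; linarith
  have hGfe : Real.Gamma (2*(n:ℝ)+2-α) = (2*(n:ℝ)+1-α) * Real.Gamma (2*(n:ℝ)+1-α) := by
    rw [show (2*(n:ℝ)+2-α) = (2*(n:ℝ)+1-α)+1 by ring, Real.Gamma_add_one hpos.ne']
  have hGb' : 0 < Real.Gamma (2*(n:ℝ)+1-α) := Real.Gamma_pos_of_pos (by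
    have := Nat.cast_nonneg (α := ℝ) n; linarith)
  rw [hg'_def, hc_def]
  simp only []
  rw [show (2*(n:ℝ)+1-α-1) = 2*(n:ℝ)-α by ring, hGfe]
  field_simp
end

section
/- Let a : ℕ → [0,∞] (extended nonnegative reals). Define f : (0,1) → [0,∞] by f(λ) = ∑_{n=0}^∞ n!·λ^(2n)·a(n), a tsum in [0,∞]. For m ∈ ℕ let J^m denote the m-fold iterated integration operator, J^0 g = g and (J^(k+1) g)(x) = ∫₀^x (J^k g)(t) dt (Lebesgue lower integral). Then for every m ≥ 1, (J^m f)(1) = ∑_{n=0}^∞ n!·((2n)!/(2n+m)!)·a(n), and this quantity is finite if and only if ∑_{n=0}^∞ (n!/(1+n^m))·a(n) < ∞. (Sequence form of Theorem 2.10: Φ ∈ D^{−m,2} iff the m-fold iterated integral of λ ↦ ∫ |SΦ(λu)|² dν(u) over 0 < λ₁ < ⋯ < λ_m < 1 is finite.) -/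
open MeasureTheory ENNReal

lemma nat_pow_mul_factorial_le (n m : ℕ) :
    (n+1)^m * (2*n).factorial ≤ (2*n+m).factorial := by
  induction m with
  | zero => simp
  | succ k ih =>
    calc (n+1)^(k+1) * (2*n).factorial = (n+1) * ((n+1)^k * (2*n).factorial) := by ring
    _ ≤ (n+1) * (2*n+k).factorial := Nat.mul_le_mul_left _ ih
    _ ≤ (2*n+k+1) * (2*n+k).factorial := Nat.mul_le_mul_right _ (by omega)
    _ = (2*n+(k+1)).factorial := by rw [show 2*n+(k+1) = (2*n+k)+1 by omega, Nat.factorial_succ]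

lemma nat_one_add_pow_le (n m : ℕ) (hm : 1 ≤ m) : 1 + n^m ≤ (n+1)^m := by
  induction m with
  | zero => omega
  | succ k ih =>
    rcases Nat.eq_zero_or_pos k with hk | hk
    · subst hk; simp; omega
    · have h1 := ih hk
      calc 1 + n^(k+1) ≤ (1 + n^k) * (n+1) := by
            have : n^(k+1) = n^k * n := by ring
            nlinarith [Nat.zero_le (n^k)]
      _ ≤ (n+1)^k * (n+1) := Nat.mul_le_mul_right _ h1
      _ = (n+1)^(k+1) := by ring

lemma nat_factorial_le_pow_mul (n m : ℕ) :
    (2*n+m).factorial ≤ (2*n+m)^m * (2*n).factorial := by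
  induction m with
  | zero => simp
  | succ k ih =>
    calc (2*n+(k+1)).factorial = (2*n+k+1) * (2*n+k).factorial := by
          rw [show 2*n+(k+1) = (2*n+k)+1 by omega, Nat.factorial_succ]
    _ ≤ (2*n+k+1) * ((2*n+k)^k * (2*n).factorial) := Nat.mul_le_mul_left _ ih
    _ ≤ (2*n+k+1) * ((2*n+k+1)^k * (2*n).factorial) := by
        exact Nat.mul_le_mul_left _ (Nat.mul_le_mul_right _ (Nat.pow_le_pow_left (by omega) k))
    _ = (2*n+(k+1))^(k+1) * (2*n).factorial := by ring_nf

lemma nat_factorial_upper (n m : ℕ) :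
    (2*n+m).factorial ≤ (2*(m+2))^m * (1 + n^m) * (2*n).factorial := by
  refine (nat_factorial_le_pow_mul n m).trans (Nat.mul_le_mul_right _ ?_)
  calc (2*n+m)^m ≤ ((m+2)*(n+1))^m := Nat.pow_le_pow_left (by nlinarith) m
  _ = (m+2)^m * (n+1)^m := mul_pow _ _ _
  _ ≤ (m+2)^m * (2^m * (1+n^m)) := by
      refine Nat.mul_le_mul_left _ ?_
      rcases Nat.eq_zero_or_pos n with hn | hn
      · subst hn
        calc (0+1)^m = 1 := one_pow m
        _ ≤ 2^m * (1+0^m) := Nat.one_le_iff_ne_zero.mpr (by positivity)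
      · calc (n+1)^m ≤ (2*n)^m := Nat.pow_le_pow_left (by omega) m
          _ = 2^m * n^m := mul_pow _ _ _
          _ ≤ 2^m * (1+n^m) := Nat.mul_le_mul_left _ (by omega)
  _ = (2*(m+2))^m * (1+n^m) := by rw [mul_pow]; ring

lemma nat_factorial_lower (n m : ℕ) (hm : 1 ≤ m) :
    (2*n).factorial * (1 + n^m) ≤ (2*n+m).factorial := by
  calc (2*n).factorial * (1 + n^m) ≤ (2*n).factorial * (n+1)^m :=
      Nat.mul_le_mul_left _ (nat_one_add_pow_le n m hm)
  _ = (n+1)^m * (2*n).factorial := by ring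
  _ ≤ (2*n+m).factorial := nat_pow_mul_factorial_le n m

/-- Cross-multiplication criterion for division inequalities in `ℝ≥0∞`. -/
lemma ediv_le_ediv {a b c d : ℝ≥0∞} (hb0 : b ≠ 0) (hbt : b ≠ ⊤) (hd0 : d ≠ 0) (hdt : d ≠ ⊤)
    (h : a * d ≤ c * b) : a / b ≤ c / d := by
  rw [ENNReal.div_le_iff hb0 hbt, div_eq_mul_inv, mul_right_comm, ← div_eq_mul_inv,
    ENNReal.le_div_iff_mul_le (Or.inl hd0) (Or.inl hdt)]
  exact h

lemma lint_pow (p : ℕ) (x : ℝ) :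
    ∫⁻ t in Set.Ioo (0:ℝ) x, ENNReal.ofReal t ^ p =
      ENNReal.ofReal x ^ (p+1) / (p+1) := by
  rcases le_or_gt x 0 with hx | hx
  · rw [Set.Ioo_eq_empty (by simpa using not_lt.mpr hx)]
    simp [ENNReal.ofReal_of_nonpos hx, zero_pow (Nat.succ_ne_zero p), ENNReal.zero_div]
  · have hcong : ∀ t ∈ Set.Ioo (0:ℝ) x, ENNReal.ofReal t ^ p = ENNReal.ofReal (t ^ p) := by
      intro t ht
      rw [← ENNReal.ofReal_pow ht.1.le]
    rw [setLIntegral_congr_fun measurableSet_Ioo hcong]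
    have hint : IntegrableOn (fun t : ℝ => t ^ p) (Set.Ioo 0 x) :=
      ((continuous_pow p).continuousOn.integrableOn_Icc).mono_set Set.Ioo_subset_Icc_self
    rw [← ofReal_integral_eq_lintegral_ofReal hint
        (ae_restrict_of_forall_mem measurableSet_Ioo (fun t ht => pow_nonneg ht.1.le p))]
    have : ∫ t in Set.Ioo (0:ℝ) x, t ^ p = x ^ (p+1) / (p+1) := by
      rw [← integral_Ioc_eq_integral_Ioo, ← intervalIntegral.integral_of_le hx.le,
        integral_pow]
      simp
    rw [this, ENNReal.ofReal_div_of_pos (by positivity), ENNReal.ofReal_pow hx.le]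
    congr 1
    rw [show ((p:ℝ)+1) = ((p+1 : ℕ) : ℝ) by push_cast; ring, ENNReal.ofReal_natCast]
    push_cast
    ring

/-- The `k`-fold iterated integration operator: `J^0 g = g` and
`(J^(k+1) g)(x) = ∫₀ˣ (J^k g)(t) dt` (lower Lebesgue integral). -/
noncomputable def iterIntegral : ℕ → (ℝ → ℝ≥0∞) → (ℝ → ℝ≥0∞)
  | 0, g => g
  | k + 1, g => fun x => ∫⁻ t in Set.Ioo (0 : ℝ) x, iterIntegral k g t

lemma iter_formula (a : ℕ → ℝ≥0∞) (k : ℕ) (x : ℝ) :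
    iterIntegral k
        (fun x : ℝ => ∑' n : ℕ, (n.factorial : ℝ≥0∞) * ENNReal.ofReal x ^ (2 * n) * a n) x =
      ∑' n : ℕ, (n.factorial : ℝ≥0∞) *
        (((2 * n).factorial : ℝ≥0∞) / ((2 * n + k).factorial : ℝ≥0∞)) *
        ENNReal.ofReal x ^ (2 * n + k) * a n := by
  induction k generalizing x with
  | zero =>
    show (∑' n : ℕ, (n.factorial : ℝ≥0∞) * ENNReal.ofReal x ^ (2 * n) * a n) = _
    refine tsum_congr fun n => ?_
    simp only [Nat.add_zero]
    rw [ENNReal.div_self (by exact_mod_cast (2*n).factorial_pos.ne') (natCast_ne_top _)]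
    ring
  | succ k ih =>
    show (∫⁻ t in Set.Ioo (0:ℝ) x, iterIntegral k _ t) = _
    calc (∫⁻ t in Set.Ioo (0:ℝ) x, iterIntegral k
          (fun x : ℝ => ∑' n : ℕ, (n.factorial : ℝ≥0∞) * ENNReal.ofReal x ^ (2 * n) * a n) t)
        = ∫⁻ t in Set.Ioo (0:ℝ) x, ∑' n : ℕ, (n.factorial : ℝ≥0∞) *
            (((2*n).factorial : ℝ≥0∞) / ((2*n+k).factorial : ℝ≥0∞)) *
            ENNReal.ofReal t ^ (2*n+k) * a n := lintegral_congr fun t => ih t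
      _ = ∑' n : ℕ, ∫⁻ t in Set.Ioo (0:ℝ) x, (n.factorial : ℝ≥0∞) *
            (((2*n).factorial : ℝ≥0∞) / ((2*n+k).factorial : ℝ≥0∞)) *
            ENNReal.ofReal t ^ (2*n+k) * a n :=
          lintegral_tsum fun n =>
            (((measurable_const.mul (ENNReal.measurable_ofReal.pow_const _)).mul
              measurable_const)).aemeasurable
      _ = _ := by
          refine tsum_congr fun n => ?_
          have h1 : ∀ t : ℝ, (n.factorial : ℝ≥0∞) *
              (((2*n).factorial : ℝ≥0∞) / ((2*n+k).factorial : ℝ≥0∞)) *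
              ENNReal.ofReal t ^ (2*n+k) * a n =
              ((n.factorial : ℝ≥0∞) *
              (((2*n).factorial : ℝ≥0∞) / ((2*n+k).factorial : ℝ≥0∞)) * a n) *
              ENNReal.ofReal t ^ (2*n+k) := fun t => by ring
          simp_rw [h1]
          rw [lintegral_const_mul _ (ENNReal.measurable_ofReal.pow_const _), lint_pow]
          have hfs : ((2*n+(k+1)).factorial : ℝ≥0∞) =
              ((2*n+k+1 : ℕ) : ℝ≥0∞) * ((2*n+k).factorial : ℝ≥0∞) := by
            rw [show 2*n+(k+1) = (2*n+k)+1 by omega, Nat.factorial_succ]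
            push_cast; ring
          rw [hfs]
          have he : ((2*n+k+1 : ℕ) : ℝ≥0∞) ≠ 0 := by positivity
          have hcast : ((2*n+k : ℕ) : ℝ≥0∞) + 1 = ((2*n+k+1 : ℕ) : ℝ≥0∞) := by push_cast; ring
          rw [hcast, div_eq_mul_inv, div_eq_mul_inv, div_eq_mul_inv,
            ENNReal.mul_inv (Or.inl he) (Or.inl (natCast_ne_top _)),
            show 2*n+(k+1) = 2*n+k+1 from by omega]
          ring

/-- Sequence form of Theorem 2.10: for `a : ℕ → [0,∞]`, `f(λ) = ∑ n! λ^(2n) a n` and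
`m ≥ 1`, the `m`-fold iterated integral `(J^m f)(1)` equals `∑ n! ((2n)!/(2n+m)!) a n`,
and this is finite iff `∑ (n!/(1+n^m)) a n < ∞`. -/
theorem dual_Dm_characterization (a : ℕ → ℝ≥0∞) (m : ℕ) (hm : 1 ≤ m) :
    (iterIntegral m
        (fun x : ℝ => ∑' n : ℕ, (n.factorial : ℝ≥0∞) * ENNReal.ofReal x ^ (2 * n) * a n) 1) =
      (∑' n : ℕ, (n.factorial : ℝ≥0∞) *
        (((2 * n).factorial : ℝ≥0∞) / ((2 * n + m).factorial : ℝ≥0∞)) * a n) ∧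
    ((iterIntegral m
        (fun x : ℝ => ∑' n : ℕ, (n.factorial : ℝ≥0∞) * ENNReal.ofReal x ^ (2 * n) * a n) 1) < ⊤ ↔
      (∑' n : ℕ, (n.factorial : ℝ≥0∞) / (1 + (n : ℝ≥0∞) ^ m) * a n) < ⊤) := by
  have heq : (iterIntegral m
      (fun x : ℝ => ∑' n : ℕ, (n.factorial : ℝ≥0∞) * ENNReal.ofReal x ^ (2 * n) * a n) 1) =
      (∑' n : ℕ, (n.factorial : ℝ≥0∞) *
        (((2 * n).factorial : ℝ≥0∞) / ((2 * n + m).factorial : ℝ≥0∞)) * a n) := by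
    rw [iter_formula]
    simp [ENNReal.ofReal_one]
  refine ⟨heq, ?_⟩
  rw [heq]
  -- nonzero/finiteness facts
  have hden0 : ∀ n : ℕ, (1 + (n : ℝ≥0∞) ^ m) ≠ 0 := fun n => by simp
  have hdent : ∀ n : ℕ, (1 + (n : ℝ≥0∞) ^ m) ≠ ⊤ := fun n => by
    refine ENNReal.add_ne_top.mpr ⟨ENNReal.one_ne_top, ?_⟩
    exact ENNReal.pow_ne_top (natCast_ne_top n)
  have hdcast : ∀ n : ℕ, (1 + (n : ℝ≥0∞) ^ m) = ((1 + n^m : ℕ) : ℝ≥0∞) := fun n => by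
    push_cast; ring
  have hfac0 : ∀ j : ℕ, ((j.factorial : ℝ≥0∞)) ≠ 0 := fun j => by
    exact_mod_cast j.factorial_pos.ne'
  -- S1 ≤ S2
  have hle1 : (∑' n : ℕ, (n.factorial : ℝ≥0∞) *
      (((2 * n).factorial : ℝ≥0∞) / ((2 * n + m).factorial : ℝ≥0∞)) * a n) ≤
      (∑' n : ℕ, (n.factorial : ℝ≥0∞) / (1 + (n : ℝ≥0∞) ^ m) * a n) := by
    refine ENNReal.tsum_le_tsum fun n => ?_
    refine mul_le_mul_left ?_ (a n)
    rw [← mul_div_assoc]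
    refine ediv_le_ediv (hfac0 _) (natCast_ne_top _) (hden0 n) (hdent n) ?_
    rw [hdcast]
    have keyN : n.factorial * (2*n).factorial * (1 + n^m) ≤ n.factorial * (2*n+m).factorial := by
      calc n.factorial * (2*n).factorial * (1 + n^m)
          = n.factorial * ((2*n).factorial * (1 + n^m)) := by ring
        _ ≤ n.factorial * (2*n+m).factorial :=
            Nat.mul_le_mul_left _ (nat_factorial_lower n m hm)
    exact_mod_cast keyN
  -- S2 ≤ C * S1
  have hle2 : (∑' n : ℕ, (n.factorial : ℝ≥0∞) / (1 + (n : ℝ≥0∞) ^ m) * a n) ≤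
      (((2*(m+2))^m : ℕ) : ℝ≥0∞) * (∑' n : ℕ, (n.factorial : ℝ≥0∞) *
      (((2 * n).factorial : ℝ≥0∞) / ((2 * n + m).factorial : ℝ≥0∞)) * a n) := by
    rw [← ENNReal.tsum_mul_left]
    refine ENNReal.tsum_le_tsum fun n => ?_
    rw [← mul_assoc]
    refine mul_le_mul_left ?_ (a n)
    rw [← mul_div_assoc, ← mul_div_assoc]
    refine ediv_le_ediv (hden0 n) (hdent n) (hfac0 _) (natCast_ne_top _) ?_
    rw [hdcast]
    have keyN : n.factorial * (2*n+m).factorial ≤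
        (2*(m+2))^m * (n.factorial * (2*n).factorial) * (1 + n^m) := by
      calc n.factorial * (2*n+m).factorial
          ≤ n.factorial * ((2*(m+2))^m * (1 + n^m) * (2*n).factorial) :=
            Nat.mul_le_mul_left _ (nat_factorial_upper n m)
        _ = (2*(m+2))^m * (n.factorial * (2*n).factorial) * (1 + n^m) := by ring
    exact_mod_cast keyN
  constructor
  · intro h
    exact lt_of_le_of_lt hle2 (ENNReal.mul_lt_top (lt_top_iff_ne_top.mpr
      (natCast_ne_top _)) h)
  · intro h
    exact lt_of_le_of_lt hle1 h
end

section
/- Let α ∈ (0,1), m ∈ ℕ, and a : ℕ → [0,∞] (extended nonnegative reals). Define f : (0,1) → [0,∞] by f(λ) = ∑_{n=0}^∞ n!·λ^(2n)·a(n), a tsum in [0,∞]. For k ∈ ℕ let J^k denote the k-fold iterated integration operator, J^0 g = g and (J^(k+1) g)(x) = ∫₀^x (J^k g)(t) dt (Lebesgue lower integral). Then (1/Γ(α))·∫₀¹ (1−λ)^(α−1)·(J^m f)(λ) dλ < ∞ if and only if ∑_{n=0}^∞ (n!/(1+n^(m+α)))·a(n) < ∞. (Sequence form of Theorem 2.11: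 Φ ∈ D^{−m−α,2}.) -/
open MeasureTheory ENNReal Real

lemma measurable_iterIntegral {g : ℝ → ℝ≥0∞} (hg : Measurable g) :
    ∀ k, Measurable (iterIntegral k g)
  | 0 => hg
  | k + 1 => by
    have : Monotone fun x => ∫⁻ t in Set.Ioo (0 : ℝ) x, iterIntegral k g t := by
      intro x y hxy
      exact lintegral_mono_set (Set.Ioo_subset_Ioo_right hxy)
    exact this.measurable

lemma iterIntegral_const_mul (c : ℝ≥0∞) {g : ℝ → ℝ≥0∞} (hg : Measurable g) :
    ∀ k x, iterIntegral k (fun y => c * g y) x = c * iterIntegral k g x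
  | 0, x => rfl
  | k + 1, x => by
    show (∫⁻ t in Set.Ioo (0:ℝ) x, iterIntegral k (fun y => c * g y) t) = _
    rw [show (fun t => iterIntegral k (fun y => c * g y) t)
        = fun t => c * iterIntegral k g t from funext fun t => iterIntegral_const_mul c hg k t]
    exact lintegral_const_mul c (measurable_iterIntegral hg k)

lemma iterIntegral_tsum {g : ℕ → ℝ → ℝ≥0∞} (hg : ∀ n, Measurable (g n)) :
    ∀ k x, iterIntegral k (fun y => ∑' n, g n y) x = ∑' n, iterIntegral k (g n) x
  | 0, x => rfl
  | k + 1, x => by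
    show (∫⁻ t in Set.Ioo (0:ℝ) x, iterIntegral k (fun y => ∑' n, g n y) t) = _
    rw [show (fun t => iterIntegral k (fun y => ∑' n, g n y) t)
        = fun t => ∑' n, iterIntegral k (g n) t from funext fun t => iterIntegral_tsum hg k t]
    exact lintegral_tsum fun n => (measurable_iterIntegral (hg n) k).aemeasurable

lemma lintegral_pow_Ioo {x : ℝ} (hx : 0 ≤ x) (p : ℕ) :
    (∫⁻ t in Set.Ioo (0:ℝ) x, ENNReal.ofReal t ^ p)
      = ENNReal.ofReal x ^ (p + 1) * ((p + 1 : ℕ) : ℝ≥0∞)⁻¹ := by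
  have h1 : (∫⁻ t in Set.Ioo (0:ℝ) x, ENNReal.ofReal t ^ p)
      = ∫⁻ t in Set.Ioo (0:ℝ) x, ENNReal.ofReal (t ^ p) := by
    refine setLIntegral_congr_fun measurableSet_Ioo (fun t ht => ?_)
    rw [ENNReal.ofReal_pow ht.1.le]
  rw [h1]
  have hint : IntegrableOn (fun t : ℝ => t ^ p) (Set.Ioo 0 x) :=
    ((continuous_pow p).integrableOn_Icc (a := 0) (b := x)).mono_set Set.Ioo_subset_Icc_self
  rw [← ofReal_integral_eq_lintegral_ofReal hint
      ((ae_restrict_mem measurableSet_Ioo).mono fun t ht => pow_nonneg ht.1.le p)]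
  have : (∫ t in Set.Ioo (0:ℝ) x, t ^ p) = x ^ (p+1) / (p+1) := by
      rw [← integral_Ioc_eq_integral_Ioo, ← intervalIntegral.integral_of_le hx,
        integral_pow]
      simp
  rw [this, div_eq_mul_inv, ENNReal.ofReal_mul (by positivity), ENNReal.ofReal_pow hx,
      ENNReal.ofReal_inv_of_pos (by positivity)]
  congr 2
  rw [show ((p:ℝ)+1) = ((p+1:ℕ):ℝ) by push_cast; ring, ENNReal.ofReal_natCast]


lemma iterIntegral_pow (j : ℕ) :
    ∀ (k : ℕ) {x : ℝ}, 0 ≤ x →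
      iterIntegral k (fun y => ENNReal.ofReal y ^ j) x
        = (j.factorial : ℝ≥0∞) * ((j + k).factorial : ℝ≥0∞)⁻¹ * ENNReal.ofReal x ^ (j + k)
  | 0, x, hx => by
    simp only [iterIntegral, Nat.add_zero]
    rw [ENNReal.mul_inv_cancel (by exact_mod_cast j.factorial_ne_zero) (by simp), one_mul]
  | k + 1, x, hx => by
    show (∫⁻ t in Set.Ioo (0:ℝ) x, iterIntegral k (fun y => ENNReal.ofReal y ^ j) t) = _
    rw [setLIntegral_congr_fun measurableSet_Ioo (fun t ht =>
      iterIntegral_pow j k ht.1.le)]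
    rw [lintegral_const_mul' _ _ (ENNReal.mul_ne_top (by simp) (by simp [Nat.factorial_ne_zero])), lintegral_pow_Ioo hx]
    have hfac : ((j + k + 1).factorial : ℝ≥0∞) = ((j+k).factorial : ℝ≥0∞) * ((j+k+1 : ℕ) : ℝ≥0∞) := by
      rw [Nat.factorial_succ]; push_cast; ring
    rw [show j + (k+1) = j + k + 1 from rfl, hfac,
      ENNReal.mul_inv (Or.inl (by exact_mod_cast (j+k).factorial_ne_zero)) (Or.inl (by simp))]
    ring

lemma nat_fact_lower (j : ℕ) : ∀ m : ℕ, (j+1)^m * j.factorial ≤ (j+m).factorial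
  | 0 => by simp
  | m + 1 => by
    calc (j+1)^(m+1) * j.factorial = (j+1) * ((j+1)^m * j.factorial) := by ring
    _ ≤ (j+1) * (j+m).factorial := Nat.mul_le_mul_left _ (nat_fact_lower j m)
    _ ≤ (j+m+1) * (j+m).factorial := Nat.mul_le_mul_right _ (by omega)
    _ = (j+(m+1)).factorial := by rw [← Nat.factorial_succ]; ring_nf

lemma nat_fact_upper (j : ℕ) : ∀ m : ℕ, (j+m).factorial ≤ (j+m)^m * j.factorial
  | 0 => by simp
  | m + 1 => by
    calc (j+(m+1)).factorial = (j+m+1) * (j+m).factorial := by rw [← Nat.factorial_succ]; ring_nf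
    _ ≤ (j+m+1) * ((j+m)^m * j.factorial) := Nat.mul_le_mul_left _ (nat_fact_upper j m)
    _ ≤ (j+m+1) * ((j+m+1)^m * j.factorial) := by
        exact Nat.mul_le_mul_left _ (Nat.mul_le_mul_right _ (Nat.pow_le_pow_left (by omega) m))
    _ = (j+(m+1))^(m+1) * j.factorial := by ring_nf

lemma real_L1 {α : ℝ} (hα : α ∈ Set.Ioo (0:ℝ) 1) (m n : ℕ) :
    1 + (n:ℝ) ^ ((m:ℝ) + α) ≤ 2 * ((2*n+1:ℝ))^m * ((2*(n:ℝ)+m+1))^α := by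
  set b : ℝ := 2*n+1 with hbdef
  have hn : (0:ℝ) ≤ n := n.cast_nonneg
  have hm : (0:ℝ) ≤ m := m.cast_nonneg
  have hb1 : (1:ℝ) ≤ b := by rw [hbdef]; linarith
  have hbma : b ^ m * b ^ α = b ^ ((m:ℝ) + α) := by
    rw [← Real.rpow_natCast b m, ← Real.rpow_add (by positivity)]
  have h1 : (1:ℝ) ≤ b ^ ((m:ℝ) + α) := Real.one_le_rpow hb1 (by linarith [hα.1])
  have h2 : (n:ℝ) ^ ((m:ℝ) + α) ≤ b ^ ((m:ℝ) + α) :=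
    Real.rpow_le_rpow hn (by rw [hbdef]; linarith) (by linarith [hα.1])
  have h3 : b ^ α ≤ (2*(n:ℝ)+m+1) ^ α :=
    Real.rpow_le_rpow (by positivity) (by rw [hbdef]; linarith) hα.1.le
  calc 1 + (n:ℝ) ^ ((m:ℝ) + α) ≤ 2 * (b ^ m * b ^ α) := by rw [hbma]; linarith
  _ ≤ 2 * (b ^ m * (2*(n:ℝ)+m+1) ^ α) := by
      have : (0:ℝ) ≤ b ^ m := by positivity
      nlinarith
  _ = 2 * (2*n+1:ℝ)^m * ((2*(n:ℝ)+m+1))^α := by ring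

lemma real_L2 {α : ℝ} (hα : α ∈ Set.Ioo (0:ℝ) 1) (m n : ℕ) :
    ((2*(n:ℝ)+m+1))^α * ((2*(n:ℝ)+m))^m ≤ (2*(m:ℝ)+6)^(m+1) * (1 + (n:ℝ)^((m:ℝ)+α)) := by
  have hn : (0:ℝ) ≤ n := n.cast_nonneg
  have hm : (0:ℝ) ≤ m := m.cast_nonneg
  set q : ℝ := 2*n+m+1 with hq
  set B : ℝ := 2*m+6 with hB
  set M : ℝ := max 1 (n:ℝ) with hM
  have hM1 : (1:ℝ) ≤ M := le_max_left _ _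
  have hM0 : (0:ℝ) ≤ M := by linarith
  have hB1 : (1:ℝ) ≤ B := by rw [hB]; linarith
  have hq0 : (0:ℝ) ≤ q := by rw [hq]; linarith
  have hqB : q ≤ B * M := by
    rcases Nat.eq_zero_or_pos n with h0 | h1
    · subst h0; simp only [hq, hB, hM, Nat.cast_zero, mul_zero, zero_add]
      have : max (1:ℝ) 0 = 1 := by norm_num
      rw [this]; linarith
    · have hn1 : (1:ℝ) ≤ n := by exact_mod_cast h1
      have : M = (n:ℝ) := max_eq_right hn1
      rw [this, hq, hB]; nlinarith
  have step1 : q^α * ((2*(n:ℝ)+m))^m ≤ q^α * q^m := by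
    have h1 : ((2*(n:ℝ)+m))^m ≤ q^m := pow_le_pow_left₀ (by linarith) (by rw [hq]; linarith) m
    have h2 : (0:ℝ) ≤ q^α := Real.rpow_nonneg hq0 α
    nlinarith
  have step2 : q^α * q^m ≤ (B*M)^α * (B*M)^m := by
    have h1 : q^α ≤ (B*M)^α := Real.rpow_le_rpow hq0 hqB hα.1.le
    have h2 : q^m ≤ (B*M)^m := pow_le_pow_left₀ hq0 hqB m
    have h3 : (0:ℝ) ≤ q^m := by positivity
    have h4 : (0:ℝ) ≤ (B*M)^α := Real.rpow_nonneg (by nlinarith) α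
    nlinarith
  have step3 : (B*M)^α * (B*M)^m = B^((m:ℝ)+α) * M^((m:ℝ)+α) := by
    have hBM : (0:ℝ) < B*M := by nlinarith
    rw [← Real.rpow_natCast (B*M) m, ← Real.rpow_add hBM,
      Real.mul_rpow (by linarith : (0:ℝ) ≤ B) hM0, add_comm α (m:ℝ)]
  have step4 : B^((m:ℝ)+α) ≤ B^(m+1 : ℕ) := by
    rw [← Real.rpow_natCast B (m+1)]
    exact Real.rpow_le_rpow_of_exponent_le hB1 (by push_cast; linarith [hα.2])
  have step5 : M^((m:ℝ)+α) ≤ 1 + (n:ℝ)^((m:ℝ)+α) := by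
    rcases Nat.eq_zero_or_pos n with h0 | h1
    · subst h0
      have : M = 1 := by rw [hM]; norm_num
      rw [this, Real.one_rpow]
      have : (0:ℝ) ≤ ((0:ℕ):ℝ)^((m:ℝ)+α) := Real.rpow_nonneg (by norm_num) _
      linarith
    · have hn1 : (1:ℝ) ≤ n := by exact_mod_cast h1
      have : M = (n:ℝ) := max_eq_right hn1
      rw [this]; linarith
  calc q^α * ((2*(n:ℝ)+m))^m ≤ (B*M)^α * (B*M)^m := le_trans step1 step2
  _ = B^((m:ℝ)+α) * M^((m:ℝ)+α) := step3
  _ ≤ B^(m+1:ℕ) * (1 + (n:ℝ)^((m:ℝ)+α)) := by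
      have h1 : (0:ℝ) ≤ M^((m:ℝ)+α) := Real.rpow_nonneg hM0 _
      have h2 : (0:ℝ) ≤ B^((m:ℝ)+α) := Real.rpow_nonneg (by linarith) _
      nlinarith
  _ = (2*(m:ℝ)+6)^(m+1) * (1 + (n:ℝ)^((m:ℝ)+α)) := by rw [hB]

lemma third_le_pow_div (p : ℕ) : (1:ℝ)/3 ≤ ((p:ℝ)/(p+1))^p := by
  rcases Nat.eq_zero_or_pos p with h0 | h1
  · subst h0; norm_num
  · have hp : (0:ℝ) < p := by exact_mod_cast h1
    have h1e : ((p:ℝ)+1)/p ≤ Real.exp (1/p) := by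
      have h := Real.add_one_le_exp (1/(p:ℝ))
      have he : ((p:ℝ)+1)/p = 1/p + 1 := by field_simp; ring
      rw [he]; exact h
    have h2 : (((p:ℝ)+1)/p)^p ≤ Real.exp 1 := by
      calc (((p:ℝ)+1)/p)^p ≤ (Real.exp (1/p))^p :=
            pow_le_pow_left₀ (by positivity) h1e p
      _ = Real.exp ((p:ℕ) * (1/p)) := (Real.exp_nat_mul _ p).symm
      _ = Real.exp 1 := by rw [mul_one_div, div_self (ne_of_gt hp)]
    have h3 : (((p:ℝ)+1)/p)^p ≤ 3 :=
      h2.trans (Real.exp_one_lt_d9.le.trans (by norm_num))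
    have h4 : ((p:ℝ)/(p+1))^p = ((((p:ℝ)+1)/p)^p)⁻¹ := by
      rw [← inv_pow, inv_div]
    rw [h4, one_div]
    have hx0 : (0:ℝ) < (((p:ℝ)+1)/p)^p := by positivity
    exact inv_anti₀ hx0 h3

lemma I_lower {α : ℝ} (hα : α ∈ Set.Ioo (0:ℝ) 1) (p : ℕ) :
    ENNReal.ofReal (3⁻¹ * ((p:ℝ)+1)^(-α))
      ≤ ∫⁻ x in Set.Ioo (0:ℝ) 1, ENNReal.ofReal ((1-x)^(α-1)) * ENNReal.ofReal x ^ p := by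
  have hp0 : (0:ℝ) < (p:ℝ)+1 := by positivity
  set δ : ℝ := ((p:ℝ)+1)⁻¹ with hδ
  have hδ0 : 0 < δ := by positivity
  have hδ1 : δ ≤ 1 := by
    rw [hδ]
    rw [inv_le_one_iff₀]
    right; linarith [Nat.cast_nonneg (α := ℝ) p]
  have hsub : Set.Ioo (1-δ) 1 ⊆ Set.Ioo (0:ℝ) 1 :=
    Set.Ioo_subset_Ioo (by linarith) le_rfl
  set c0 : ℝ≥0∞ := ENNReal.ofReal (δ^(α-1) * (1-δ)^p) with hc0
  have hpt : ∀ x ∈ Set.Ioo (1-δ) 1,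
      c0 ≤ ENNReal.ofReal ((1-x)^(α-1)) * ENNReal.ofReal x ^ p := by
    intro x hx
    have hx0 : 0 ≤ x := le_trans (by linarith) hx.1.le
    have h1x : 0 < 1 - x := by linarith [hx.2]
    have h1 : δ^(α-1) ≤ (1-x)^(α-1) :=
      Real.rpow_le_rpow_of_nonpos h1x (by linarith [hx.1]) (by linarith [hα.2])
    have h2 : (1-δ)^p ≤ x^p := pow_le_pow_left₀ (by linarith) (by linarith [hx.1]) p
    rw [hc0, ENNReal.ofReal_mul (Real.rpow_nonneg hδ0.le _), ← ENNReal.ofReal_pow hx0]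
    exact mul_le_mul' (ENNReal.ofReal_le_ofReal h1) (ENNReal.ofReal_le_ofReal h2)
  calc ENNReal.ofReal (3⁻¹ * ((p:ℝ)+1)^(-α))
      ≤ c0 * ENNReal.ofReal δ := by
        rw [hc0, ← ENNReal.ofReal_mul (mul_nonneg (Real.rpow_nonneg hδ0.le _) (pow_nonneg (by linarith) p))]
        apply ENNReal.ofReal_le_ofReal
        have hδα : δ^(α-1) * δ = δ^α := by
          nth_rewrite 2 [← Real.rpow_one δ]
          rw [← Real.rpow_add hδ0]; ring_nf
        have h3 : (1:ℝ)/3 ≤ (1-δ)^p := by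
          have : 1 - δ = (p:ℝ)/(p+1) := by
            rw [hδ]; field_simp
            ring
          rw [this]; exact third_le_pow_div p
        have hδα2 : δ^α = ((p:ℝ)+1)^(-α) := by
          rw [hδ, Real.inv_rpow hp0.le, ← Real.rpow_neg hp0.le]
        calc 3⁻¹ * ((p:ℝ)+1)^(-α) = (1/3) * δ^α := by rw [hδα2]; ring
        _ ≤ (1-δ)^p * δ^α := by
            have : (0:ℝ) ≤ δ^α := Real.rpow_nonneg hδ0.le _
            nlinarith
        _ = δ^(α-1) * (1-δ)^p * δ := by rw [← hδα]; ring
      _ = ∫⁻ _ in Set.Ioo (1-δ) 1, c0 := by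
          rw [setLIntegral_const, Real.volume_Ioo,
            show (1:ℝ) - (1-δ) = δ by ring]
      _ ≤ ∫⁻ x in Set.Ioo (1-δ) 1, ENNReal.ofReal ((1-x)^(α-1)) * ENNReal.ofReal x ^ p := by
          apply setLIntegral_mono
          · exact (((measurable_const.sub measurable_id).pow measurable_const).ennreal_ofReal.mul
              (measurable_id.ennreal_ofReal.pow_const p))
          · exact hpt
      _ ≤ ∫⁻ x in Set.Ioo (0:ℝ) 1, ENNReal.ofReal ((1-x)^(α-1)) * ENNReal.ofReal x ^ p :=
          lintegral_mono_set hsub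

lemma I_upper {α : ℝ} (hα : α ∈ Set.Ioo (0:ℝ) 1) (p : ℕ) :
    (∫⁻ x in Set.Ioo (0:ℝ) 1, ENNReal.ofReal ((1-x)^(α-1)) * ENNReal.ofReal x ^ p)
      ≤ ENNReal.ofReal (Real.exp 1 * Real.Gamma α * ((p:ℝ)+1)^(-α)) := by
  set q : ℝ := (p:ℝ)+1 with hq
  have hq0 : (0:ℝ) < q := by positivity
  set F : ℝ → ℝ≥0∞ := fun y => ENNReal.ofReal (Real.exp 1 * (y^(α-1) * Real.exp (-(q*y)))) with hF
  have hFmeas : Measurable F := by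
    apply Measurable.ennreal_ofReal
    exact ((measurable_id.pow measurable_const).mul
      ((measurable_id.const_mul q).neg.exp)).const_mul (Real.exp 1)
  have step1 : (∫⁻ x in Set.Ioo (0:ℝ) 1, ENNReal.ofReal ((1-x)^(α-1)) * ENNReal.ofReal x ^ p)
      ≤ ∫⁻ x in Set.Ioo (0:ℝ) 1, F (1-x) := by
    apply setLIntegral_mono (hFmeas.comp (measurable_const.sub measurable_id))
    intro x hx
    have hx0 : 0 < x := hx.1
    have hx1 : x < 1 := hx.2
    have hr0 : (0:ℝ) ≤ (1-x)^(α-1) := Real.rpow_nonneg (by linarith) _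
    rw [← ENNReal.ofReal_pow hx0.le, ← ENNReal.ofReal_mul hr0]
    apply ENNReal.ofReal_le_ofReal
    have hxe : x ≤ Real.exp (x-1) := by
      have := Real.add_one_le_exp (x-1); linarith
    have hxp : x^p ≤ Real.exp 1 * Real.exp (-(q*(1-x))) := by
      calc x^p ≤ (Real.exp (x-1))^p := pow_le_pow_left₀ hx0.le hxe p
      _ = Real.exp ((p:ℕ) * (x-1)) := (Real.exp_nat_mul _ p).symm
      _ = Real.exp (1-x) * Real.exp (-(q*(1-x))) := by
          rw [← Real.exp_add]; congr 1; rw [hq]; ring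
      _ ≤ Real.exp 1 * Real.exp (-(q*(1-x))) := by
          have h1 : Real.exp (1-x) ≤ Real.exp 1 := Real.exp_le_exp.mpr (by linarith)
          have h2 : (0:ℝ) < Real.exp (-(q*(1-x))) := Real.exp_pos _
          nlinarith
    calc (1-x)^(α-1) * x^p ≤ (1-x)^(α-1) * (Real.exp 1 * Real.exp (-(q*(1-x)))) := by nlinarith
    _ = Real.exp 1 * ((1-x)^(α-1) * Real.exp (-(q*(1-x)))) := by ring
  have step2 : (∫⁻ x in Set.Ioo (0:ℝ) 1, F (1-x)) = ∫⁻ y in Set.Ioo (0:ℝ) 1, F y := by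
    have h := (Measure.measurePreserving_sub_left volume (1:ℝ)).setLIntegral_comp_emb
      (MeasurableEquiv.subLeft (1:ℝ)).measurableEmbedding F (Set.Ioo 0 1)
    rw [h, Set.image_const_sub_Ioo]
    norm_num
  have step3 : (∫⁻ y in Set.Ioo (0:ℝ) 1, F y) ≤ ∫⁻ y in Set.Ioi (0:ℝ), F y :=
    lintegral_mono_set (Set.Ioo_subset_Ioi_self)
  have hInt : IntegrableOn (fun y : ℝ => y^(α-1) * Real.exp (-(q*y))) (Set.Ioi 0) := by
    have h := integrableOn_rpow_mul_exp_neg_mul_rpow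
      (s := α-1) (p := 1) (b := q) (by linarith [hα.1]) zero_lt_one hq0
    simp only [Real.rpow_one, neg_mul] at h ⊢
    exact h
  have step4 : (∫⁻ y in Set.Ioi (0:ℝ), F y)
      = ENNReal.ofReal (∫ y in Set.Ioi (0:ℝ), Real.exp 1 * (y^(α-1) * Real.exp (-(q*y)))) := by
    rw [← ofReal_integral_eq_lintegral_ofReal (hInt.const_mul (Real.exp 1))
      ((ae_restrict_mem measurableSet_Ioi).mono fun y hy => by
        have : (0:ℝ) ≤ y := le_of_lt hy
        positivity)]
  have step5 : (∫ y in Set.Ioi (0:ℝ), Real.exp 1 * (y^(α-1) * Real.exp (-(q*y))))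
      = Real.exp 1 * ((1/q)^α * Real.Gamma α) := by
    rw [integral_const_mul, Real.integral_rpow_mul_exp_neg_mul_Ioi hα.1 hq0]
  calc (∫⁻ x in Set.Ioo (0:ℝ) 1, ENNReal.ofReal ((1-x)^(α-1)) * ENNReal.ofReal x ^ p)
      ≤ ∫⁻ y in Set.Ioi (0:ℝ), F y := le_trans step1 (le_trans (le_of_eq step2) step3)
  _ = ENNReal.ofReal (Real.exp 1 * ((1/q)^α * Real.Gamma α)) := by rw [step4, step5]
  _ = ENNReal.ofReal (Real.exp 1 * Real.Gamma α * ((p:ℝ)+1)^(-α)) := by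
      congr 1
      rw [one_div, Real.inv_rpow hq0.le, ← Real.rpow_neg hq0.le, hq]
      ring

lemma ennreal_mul_inv_le {A B C D : ℝ≥0∞} (hB0 : B ≠ 0) (hBt : B ≠ ⊤) (hD0 : D ≠ 0)
    (hDt : D ≠ ⊤) (key : A * D ≤ C * B) : A * B⁻¹ ≤ C * D⁻¹ := by
  calc A * B⁻¹ = A * D * D⁻¹ * B⁻¹ := by
        rw [mul_assoc A D D⁻¹, ENNReal.mul_inv_cancel hD0 hDt, mul_one]
  _ ≤ C * B * D⁻¹ * B⁻¹ := by gcongr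
  _ = C * D⁻¹ * (B * B⁻¹) := by ring
  _ = C * D⁻¹ := by rw [ENNReal.mul_inv_cancel hB0 hBt, mul_one]

lemma weight_up {α : ℝ} (hα : α ∈ Set.Ioo (0:ℝ) 1) (m n : ℕ) :
    ((n.factorial : ℝ≥0∞) * ((2*n).factorial : ℝ≥0∞) * (((2*n+m).factorial : ℝ≥0∞))⁻¹)
        * ENNReal.ofReal (Real.exp 1 * Real.Gamma α * (((2*n+m : ℕ):ℝ)+1)^(-α))
      ≤ ENNReal.ofReal (2 * (Real.exp 1 * Real.Gamma α))
        * ((n.factorial : ℝ≥0∞) * ((1:ℝ≥0∞) + ENNReal.ofReal ((n:ℝ)^((m:ℝ)+α)))⁻¹) := by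
  have hΓ : (0:ℝ) < Real.Gamma α := Real.Gamma_pos_of_pos hα.1
  set E : ℝ := Real.exp 1 * Real.Gamma α with hE
  have hE0 : (0:ℝ) < E := by positivity
  set q : ℝ := ((2*n+m : ℕ):ℝ)+1 with hq
  have hq0 : (0:ℝ) < q := by positivity
  have hN0 : (0:ℝ) ≤ (n:ℝ)^((m:ℝ)+α) := Real.rpow_nonneg n.cast_nonneg _
  have key : ((n.factorial : ℝ≥0∞) * ((2*n).factorial : ℝ≥0∞) * ENNReal.ofReal (E * q^(-α)))
      * ((1:ℝ≥0∞) + ENNReal.ofReal ((n:ℝ)^((m:ℝ)+α)))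
      ≤ (ENNReal.ofReal (2 * E) * (n.factorial : ℝ≥0∞)) * ((2*n+m).factorial : ℝ≥0∞) := by
    rw [← ENNReal.ofReal_one, ← ENNReal.ofReal_add zero_le_one hN0,
      ← ENNReal.ofReal_natCast n.factorial, ← ENNReal.ofReal_natCast (2*n).factorial,
      ← ENNReal.ofReal_natCast (2*n+m).factorial,
      ← ENNReal.ofReal_mul (by positivity), ← ENNReal.ofReal_mul (by positivity),
      ← ENNReal.ofReal_mul (by positivity), ← ENNReal.ofReal_mul (by positivity),
      ← ENNReal.ofReal_mul (by positivity)]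
    apply ENNReal.ofReal_le_ofReal
    have L1 : 1 + (n:ℝ)^((m:ℝ)+α) ≤ 2 * ((2*(n:ℝ)+1))^m * ((2*(n:ℝ)+m+1))^α :=
      real_L1 hα m n
    have NF : (((2*n+1 : ℕ))^m * (2*n).factorial : ℝ) ≤ ((2*n+m).factorial : ℝ) := by
      exact_mod_cast Nat.cast_le.mpr (nat_fact_lower (2*n) m)
    have hqcast : q = 2*(n:ℝ)+m+1 := by rw [hq]; push_cast; ring
    have hcancel : q^(-α) * q^α = 1 := by
      rw [← Real.rpow_add hq0]; simp
    calc (n.factorial : ℝ) * ((2*n).factorial) * (E * q^(-α)) * (1 + (n:ℝ)^((m:ℝ)+α))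
        ≤ (n.factorial : ℝ) * ((2*n).factorial) * (E * q^(-α))
            * (2 * ((2*(n:ℝ)+1))^m * q^α) := by
          apply mul_le_mul_of_nonneg_left _ (by positivity)
          rw [hqcast]; exact L1
    _ = 2 * E * (n.factorial : ℝ) * (((2*(n:ℝ)+1))^m * ((2*n).factorial))
          * (q^(-α) * q^α) := by ring
    _ = 2 * E * (n.factorial : ℝ) * (((2*(n:ℝ)+1))^m * ((2*n).factorial)) := by
          rw [hcancel, mul_one]
    _ ≤ 2 * E * (n.factorial : ℝ) * ((2*n+m).factorial : ℝ) := by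
          apply mul_le_mul_of_nonneg_left _ (by positivity)
          calc ((2*(n:ℝ)+1))^m * ((2*n).factorial : ℝ)
              = (((2*n+1 : ℕ)):ℝ)^m * ((2*n).factorial : ℝ) := by push_cast; ring
          _ ≤ ((2*n+m).factorial : ℝ) := NF
  have h1 := ennreal_mul_inv_le (A := (n.factorial : ℝ≥0∞) * ((2*n).factorial : ℝ≥0∞)
      * ENNReal.ofReal (E * q^(-α)))
    (B := ((2*n+m).factorial : ℝ≥0∞))
    (C := ENNReal.ofReal (2 * E) * (n.factorial : ℝ≥0∞))
    (D := (1:ℝ≥0∞) + ENNReal.ofReal ((n:ℝ)^((m:ℝ)+α)))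
    (by exact_mod_cast (2*n+m).factorial_ne_zero) (by simp)
    (by simp) (by simp [ENNReal.add_ne_top]) key
  calc ((n.factorial : ℝ≥0∞) * ((2*n).factorial : ℝ≥0∞) * (((2*n+m).factorial : ℝ≥0∞))⁻¹)
        * ENNReal.ofReal (E * q^(-α))
      = ((n.factorial : ℝ≥0∞) * ((2*n).factorial : ℝ≥0∞) * ENNReal.ofReal (E * q^(-α)))
        * (((2*n+m).factorial : ℝ≥0∞))⁻¹ := by ring
  _ ≤ (ENNReal.ofReal (2 * E) * (n.factorial : ℝ≥0∞))
        * ((1:ℝ≥0∞) + ENNReal.ofReal ((n:ℝ)^((m:ℝ)+α)))⁻¹ := h1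
  _ = ENNReal.ofReal (2 * E)
        * ((n.factorial : ℝ≥0∞) * ((1:ℝ≥0∞) + ENNReal.ofReal ((n:ℝ)^((m:ℝ)+α)))⁻¹) := by ring

lemma weight_low {α : ℝ} (hα : α ∈ Set.Ioo (0:ℝ) 1) (m n : ℕ) :
    (n.factorial : ℝ≥0∞) * ((1:ℝ≥0∞) + ENNReal.ofReal ((n:ℝ)^((m:ℝ)+α)))⁻¹
      ≤ ENNReal.ofReal (3 * (2*(m:ℝ)+6)^(m+1))
        * (((n.factorial : ℝ≥0∞) * ((2*n).factorial : ℝ≥0∞)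
            * (((2*n+m).factorial : ℝ≥0∞))⁻¹)
          * ENNReal.ofReal (3⁻¹ * (((2*n+m : ℕ):ℝ)+1)^(-α))) := by
  set q : ℝ := ((2*n+m : ℕ):ℝ)+1 with hq
  have hq0 : (0:ℝ) < q := by positivity
  have hN0 : (0:ℝ) ≤ (n:ℝ)^((m:ℝ)+α) := Real.rpow_nonneg n.cast_nonneg _
  set C : ℝ≥0∞ := ENNReal.ofReal (3 * (2*(m:ℝ)+6)^(m+1)) * ((n.factorial : ℝ≥0∞)
      * ((2*n).factorial : ℝ≥0∞) * ENNReal.ofReal (3⁻¹ * q^(-α))) with hC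
  have key : (n.factorial : ℝ≥0∞) * ((2*n+m).factorial : ℝ≥0∞)
      ≤ C * ((1:ℝ≥0∞) + ENNReal.ofReal ((n:ℝ)^((m:ℝ)+α))) := by
    rw [hC, ← ENNReal.ofReal_one, ← ENNReal.ofReal_add zero_le_one hN0,
      ← ENNReal.ofReal_natCast n.factorial, ← ENNReal.ofReal_natCast (2*n).factorial,
      ← ENNReal.ofReal_natCast (2*n+m).factorial,
      ← ENNReal.ofReal_mul (by positivity), ← ENNReal.ofReal_mul (by positivity),
      ← ENNReal.ofReal_mul (by positivity), ← ENNReal.ofReal_mul (by positivity),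
      ← ENNReal.ofReal_mul (by positivity)]
    apply ENNReal.ofReal_le_ofReal
    have L2 : ((2*(n:ℝ)+m+1))^α * ((2*(n:ℝ)+m))^m
        ≤ (2*(m:ℝ)+6)^(m+1) * (1 + (n:ℝ)^((m:ℝ)+α)) := real_L2 hα m n
    have NF : ((2*n+m).factorial : ℝ) ≤ (((2*n+m : ℕ))^m * (2*n).factorial : ℝ) := by
      exact_mod_cast Nat.cast_le.mpr (nat_fact_upper (2*n) m)
    have hqcast : q = 2*(n:ℝ)+m+1 := by rw [hq]; push_cast; ring
    have hcancel : q^(-α) * q^α = 1 := by rw [← Real.rpow_add hq0]; simp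
    have hqa : (0:ℝ) ≤ q^(-α) := Real.rpow_nonneg hq0.le _
    calc (n.factorial : ℝ) * ((2*n+m).factorial : ℝ)
        ≤ (n.factorial : ℝ) * (((2*n+m : ℕ))^m * ((2*n).factorial : ℝ)) := by
          apply mul_le_mul_of_nonneg_left NF (by positivity)
    _ = (n.factorial : ℝ) * ((2*n).factorial : ℝ) * q^(-α) * (q^α * ((2*(n:ℝ)+m))^m) := by
          rw [show ((((2*n+m:ℕ)):ℝ))^m = ((2*(n:ℝ)+m))^m by push_cast; ring,
            show (n.factorial : ℝ) * ((2*n).factorial : ℝ) * q^(-α)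
                * (q^α * ((2*(n:ℝ)+m))^m)
              = (n.factorial : ℝ) * ((2*n).factorial : ℝ) * ((2*(n:ℝ)+m))^m
                * (q^(-α) * q^α) from by ring, hcancel, mul_one]
          ring
    _ ≤ (n.factorial : ℝ) * ((2*n).factorial : ℝ) * q^(-α)
            * ((2*(m:ℝ)+6)^(m+1) * (1 + (n:ℝ)^((m:ℝ)+α))) := by
          apply mul_le_mul_of_nonneg_left _ (by positivity)
          rw [hqcast]; exact L2
    _ = 3 * (2*(m:ℝ)+6)^(m+1) * ((n.factorial : ℝ) * ((2*n).factorial : ℝ) * (3⁻¹ * q^(-α)))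
            * (1 + (n:ℝ)^((m:ℝ)+α)) := by ring
  have h1 := ennreal_mul_inv_le (A := (n.factorial : ℝ≥0∞))
    (B := (1:ℝ≥0∞) + ENNReal.ofReal ((n:ℝ)^((m:ℝ)+α)))
    (C := C) (D := ((2*n+m).factorial : ℝ≥0∞))
    (by simp) (by simp [ENNReal.add_ne_top])
    (by exact_mod_cast (2*n+m).factorial_ne_zero) (by simp)
    (by rw [mul_comm ((n.factorial : ℝ≥0∞)) (((2*n+m).factorial : ℝ≥0∞))] at key ⊢; exact key)
  calc (n.factorial : ℝ≥0∞) * ((1:ℝ≥0∞) + ENNReal.ofReal ((n:ℝ)^((m:ℝ)+α)))⁻¹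
      ≤ C * (((2*n+m).factorial : ℝ≥0∞))⁻¹ := h1
  _ = ENNReal.ofReal (3 * (2*(m:ℝ)+6)^(m+1))
        * (((n.factorial : ℝ≥0∞) * ((2*n).factorial : ℝ≥0∞)
            * (((2*n+m).factorial : ℝ≥0∞))⁻¹)
          * ENNReal.ofReal (3⁻¹ * q^(-α))) := by rw [hC]; ring

lemma tsum_lt_top_of_le {u v : ℕ → ℝ≥0∞} {C : ℝ≥0∞} (hC : C ≠ ⊤)
    (h : ∀ n, u n ≤ C * v n) (hv : ∑' n, v n < ⊤) : ∑' n, u n < ⊤ := by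
  have h1 : ∑' n, u n ≤ C * ∑' n, v n := by
    rw [← ENNReal.tsum_mul_left]
    exact ENNReal.tsum_le_tsum h
  exact lt_of_le_of_lt h1 (ENNReal.mul_lt_top hC.lt_top hv)

/-- Sequence form of Theorem 2.11: for `α ∈ (0,1)`, `m ∈ ℕ`, `a : ℕ → [0,∞]` and
`f(λ) = ∑ n! λ^(2n) a n`, the Riemann--Liouville integral of order `α` of `J^m f` at `1`,
`(1/Γ(α)) ∫₀¹ (1−λ)^(α−1) (J^m f)(λ) dλ`, is finite iff `∑ (n!/(1+n^(m+α))) a n < ∞`. -/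
theorem dual_Dmalpha_characterization (α : ℝ) (hα : α ∈ Set.Ioo (0 : ℝ) 1)
    (m : ℕ) (a : ℕ → ℝ≥0∞) :
    (ENNReal.ofReal (1 / Real.Gamma α) *
        ∫⁻ x in Set.Ioo (0 : ℝ) 1, ENNReal.ofReal ((1 - x) ^ (α - 1)) *
          iterIntegral m
            (fun y : ℝ => ∑' n : ℕ, (n.factorial : ℝ≥0∞) * ENNReal.ofReal y ^ (2 * n) * a n) x) <
        ⊤ ↔
      (∑' n : ℕ, (n.factorial : ℝ≥0∞) / (1 + ENNReal.ofReal ((n : ℝ) ^ ((m : ℝ) + α))) * a n) <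
        ⊤ := by
  obtain ⟨hα0, hα1⟩ := hα
  have hαIoo : α ∈ Set.Ioo (0:ℝ) 1 := ⟨hα0, hα1⟩
  have hΓ : (0:ℝ) < Real.Gamma α := Real.Gamma_pos_of_pos hα0
  set I : ℕ → ℝ≥0∞ := fun n =>
    ∫⁻ x in Set.Ioo (0:ℝ) 1, ENNReal.ofReal ((1-x)^(α-1)) * ENNReal.ofReal x ^ (2*n+m) with hI
  set c : ℕ → ℝ≥0∞ := fun n => ((n.factorial : ℝ≥0∞) * a n)
      * (((2*n).factorial : ℝ≥0∞) * (((2*n+m).factorial : ℝ≥0∞))⁻¹) with hc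
  have hmeasg : ∀ n : ℕ, Measurable (fun y : ℝ =>
      ((n.factorial : ℝ≥0∞) * a n) * ENNReal.ofReal y ^ (2*n)) :=
    fun n => (measurable_id.ennreal_ofReal.pow_const (2*n)).const_mul _
  have hmeasI : ∀ n : ℕ, Measurable (fun x : ℝ =>
      ENNReal.ofReal ((1-x)^(α-1)) * ENNReal.ofReal x ^ (2*n+m)) :=
    fun n => ((measurable_const.sub measurable_id).pow measurable_const).ennreal_ofReal.mul
      (measurable_id.ennreal_ofReal.pow_const (2*n+m))
  have hmain : (∫⁻ x in Set.Ioo (0:ℝ) 1, ENNReal.ofReal ((1 - x) ^ (α - 1)) *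
      iterIntegral m
        (fun y : ℝ => ∑' n : ℕ, (n.factorial : ℝ≥0∞) * ENNReal.ofReal y ^ (2 * n) * a n) x)
      = ∑' n, c n * I n := by
    have hpt : ∀ x ∈ Set.Ioo (0:ℝ) 1,
        ENNReal.ofReal ((1-x)^(α-1)) * iterIntegral m
          (fun y : ℝ => ∑' n : ℕ, (n.factorial : ℝ≥0∞) * ENNReal.ofReal y ^ (2 * n) * a n) x
        = ∑' n, c n * (ENNReal.ofReal ((1-x)^(α-1)) * ENNReal.ofReal x ^ (2*n+m)) := by
      intro x hx
      have hfun : (fun y : ℝ => ∑' n : ℕ, (n.factorial : ℝ≥0∞) * ENNReal.ofReal y ^ (2*n) * a n)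
          = fun y => ∑' n : ℕ, ((n.factorial : ℝ≥0∞) * a n) * ENNReal.ofReal y ^ (2*n) := by
        funext y; exact tsum_congr fun n => by ring
      rw [hfun, iterIntegral_tsum hmeasg m x, ← ENNReal.tsum_mul_left]
      refine tsum_congr fun n => ?_
      rw [iterIntegral_const_mul ((n.factorial : ℝ≥0∞) * a n)
          (g := fun y => ENNReal.ofReal y ^ (2*n))
          (by exact measurable_id.ennreal_ofReal.pow_const (2*n)) m x,
        iterIntegral_pow (2*n) m hx.1.le, hc]
      ring
    rw [setLIntegral_congr_fun measurableSet_Ioo hpt,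
      lintegral_tsum (fun n => (((hmeasI n).const_mul (c n))).aemeasurable)]
    exact tsum_congr fun n => lintegral_const_mul (c n) (hmeasI n)
  rw [hmain]
  have hA0 : ENNReal.ofReal (1/Real.Gamma α) ≠ 0 :=
    ne_of_gt (ENNReal.ofReal_pos.mpr (by positivity))
  have hiff1 : (ENNReal.ofReal (1/Real.Gamma α) * ∑' n, c n * I n < ⊤)
      ↔ (∑' n, c n * I n < ⊤) := by
    constructor
    · intro h
      by_contra hS
      rw [not_lt, top_le_iff] at hS
      rw [hS, ENNReal.mul_top hA0] at h
      exact absurd h (lt_irrefl _)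
    · intro h
      exact ENNReal.mul_lt_top ENNReal.ofReal_lt_top h
  rw [hiff1]
  have hcomp_up : ∀ n : ℕ, c n * I n
      ≤ ENNReal.ofReal (2 * (Real.exp 1 * Real.Gamma α))
        * ((n.factorial : ℝ≥0∞) / (1 + ENNReal.ofReal ((n:ℝ)^((m:ℝ)+α))) * a n) := by
    intro n
    calc c n * I n
        ≤ c n * ENNReal.ofReal (Real.exp 1 * Real.Gamma α * (((2*n+m : ℕ):ℝ)+1)^(-α)) :=
          mul_le_mul_right (I_upper hαIoo (2*n+m)) _
    _ = (((n.factorial : ℝ≥0∞) * ((2*n).factorial : ℝ≥0∞) * (((2*n+m).factorial : ℝ≥0∞))⁻¹)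
          * ENNReal.ofReal (Real.exp 1 * Real.Gamma α * (((2*n+m : ℕ):ℝ)+1)^(-α))) * a n := by
        rw [hc]; ring
    _ ≤ (ENNReal.ofReal (2 * (Real.exp 1 * Real.Gamma α))
          * ((n.factorial : ℝ≥0∞) * ((1:ℝ≥0∞) + ENNReal.ofReal ((n:ℝ)^((m:ℝ)+α)))⁻¹)) * a n :=
        mul_le_mul_left (weight_up hαIoo m n) _
    _ = ENNReal.ofReal (2 * (Real.exp 1 * Real.Gamma α))
          * ((n.factorial : ℝ≥0∞) / (1 + ENNReal.ofReal ((n:ℝ)^((m:ℝ)+α))) * a n) := by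
        rw [div_eq_mul_inv]; ring
  have hcomp_low : ∀ n : ℕ, (n.factorial : ℝ≥0∞) / (1 + ENNReal.ofReal ((n:ℝ)^((m:ℝ)+α))) * a n
      ≤ ENNReal.ofReal (3 * (2*(m:ℝ)+6)^(m+1)) * (c n * I n) := by
    intro n
    calc (n.factorial : ℝ≥0∞) / (1 + ENNReal.ofReal ((n:ℝ)^((m:ℝ)+α))) * a n
        = ((n.factorial : ℝ≥0∞) * ((1:ℝ≥0∞) + ENNReal.ofReal ((n:ℝ)^((m:ℝ)+α)))⁻¹) * a n := by
          rw [div_eq_mul_inv]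
    _ ≤ (ENNReal.ofReal (3 * (2*(m:ℝ)+6)^(m+1))
          * (((n.factorial : ℝ≥0∞) * ((2*n).factorial : ℝ≥0∞)
              * (((2*n+m).factorial : ℝ≥0∞))⁻¹)
            * ENNReal.ofReal (3⁻¹ * (((2*n+m : ℕ):ℝ)+1)^(-α)))) * a n :=
        mul_le_mul_left (weight_low hαIoo m n) _
    _ = ENNReal.ofReal (3 * (2*(m:ℝ)+6)^(m+1))
          * (c n * ENNReal.ofReal (3⁻¹ * (((2*n+m : ℕ):ℝ)+1)^(-α))) := by
        rw [hc]; ring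
    _ ≤ ENNReal.ofReal (3 * (2*(m:ℝ)+6)^(m+1)) * (c n * I n) :=
        mul_le_mul_right (mul_le_mul_right (I_lower hαIoo (2*n+m)) _) _
  constructor
  · intro h
    exact tsum_lt_top_of_le ENNReal.ofReal_ne_top hcomp_low h
  · intro h
    exact tsum_lt_top_of_le ENNReal.ofReal_ne_top hcomp_up h
end

section
/- Let σ ∈ (−1,1) and λ ∈ (0,1). Then the complex-valued integral over ℝ⁴, ∫_{ℝ⁴} exp(−(λ²/2)·((x+iy)² + (v−iw)²))·exp(−(x² + y² + v² + w² − 2σ·(xv + yw))/(1−σ²)) dx dy dv dw, equals π²·(1−σ²)/√(1−σ²·λ⁴) (a real number, viewed as a complex number). (This is the Gaussian computation at the heart of Lemma A.5, giving ∫ Sδ(⟨f,·⟩)(λu)·conj(Sδ(⟨g,·⟩)(λu)) dν(u) = (1/(2π‖f‖‖g‖))·(1−σ²λ⁴)^(−1/2) with σ = ⟨f/‖f‖, g/‖g‖⟩.) -/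
open Real MeasureTheory Complex

set_option maxHeartbeats 4000000

noncomputable def Phi4' (σ l x y v w : ℝ) : ℂ :=
  -((l : ℂ) ^ 2 / 2) * (((x : ℂ) + (y : ℂ) * Complex.I) ^ 2 +
      ((v : ℂ) - (w : ℂ) * Complex.I) ^ 2) +
    ((-(x ^ 2 + y ^ 2 + v ^ 2 + w ^ 2 - 2 * σ * (x * v + y * w)) / (1 - σ ^ 2) : ℝ) : ℂ)

noncomputable def b1' (σ l : ℝ) : ℝ := (2 - (1 - σ^2) * l^2) / (2 * (1 - σ^2))
noncomputable def b2' (σ l : ℝ) : ℝ := 2 / ((1 - σ^2) * (2 - (1 - σ^2) * l^2))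
noncomputable def b3' (σ l : ℝ) : ℝ := (2 - l^2 * (1 + σ^2)) / 2
noncomputable def b4' (σ l : ℝ) : ℝ := 2 * (1 - σ^2 * l^4) / (2 - l^2 * (1 + σ^2))

noncomputable def Phi3' (σ l x y v : ℝ) : ℂ :=
  ((-(b2' σ l) : ℝ) : ℂ) * (v : ℂ)^2
    + (((2*σ/(1-σ^2)*x : ℝ) : ℂ) + Complex.I * ((2*l^2*σ/(2-(1-σ^2)*l^2)*y : ℝ) : ℂ)) * (v : ℂ)
    + (((l^2/2*y^2 - l^2/2*x^2 - (x^2+y^2)/(1-σ^2)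
          + 2*σ^2*y^2/((1-σ^2)*(2-(1-σ^2)*l^2)) : ℝ) : ℂ)
        - Complex.I * ((l^2*x*y : ℝ) : ℂ))

noncomputable def Phi2' (σ l x y : ℝ) : ℂ :=
  ((-(b3' σ l) : ℝ) : ℂ) * (y : ℂ)^2
    + (- Complex.I * ((l^2*(1-σ^2)*x : ℝ) : ℂ)) * (y : ℂ)
    + ((-((2 + l^2*(1+σ^2))/2)*x^2 : ℝ) : ℂ)

noncomputable def Phi1' (σ l x : ℝ) : ℂ :=
  ((-(b4' σ l) : ℝ) : ℂ) * (x : ℂ)^2 + 0 * (x : ℂ) + 0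

lemma gauss_step {β : ℝ} (hβ : 0 < β) (c d : ℂ) :
    ∫ x : ℝ, Complex.exp (((-β : ℝ) : ℂ) * (x:ℂ)^2 + c * x + d) =
      ((Real.sqrt (Real.pi / β) : ℝ) : ℂ) * Complex.exp (d + c^2 * ((1/(4*β) : ℝ) : ℂ)) := by
  have hb : ((-β:ℝ):ℂ).re < 0 := by simpa using hβ
  rw [integral_cexp_quadratic hb c d]
  have hβ' : ((β:ℝ):ℂ) ≠ 0 := by exact_mod_cast hβ.ne'
  congr 1
  · rw [show (↑Real.pi / -((-β:ℝ):ℂ)) = ((Real.pi/β : ℝ):ℂ) by push_cast; ring]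
    rw [show (1/2 : ℂ) = ((1/2 : ℝ) : ℂ) by norm_num]
    rw [← Complex.ofReal_cpow (by positivity)]
    rw [← Real.sqrt_eq_rpow]
  · congr 1
    push_cast
    field_simp
    ring

section Steps

variable {σ l : ℝ} (hσ : σ^2 < 1) (hl0 : 0 < l) (hl1 : l < 1)
include hσ hl0 hl1

lemma step_w (x y v : ℝ) :
    ∫ w : ℝ, Complex.exp (Phi4' σ l x y v w)
      = ((Real.sqrt (Real.pi / b1' σ l) : ℝ) : ℂ) * Complex.exp (Phi3' σ l x y v) := by
  have hu : (1:ℝ) - σ^2 ≠ 0 := by nlinarith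
  have hupos : (0:ℝ) < 1 - σ^2 := by nlinarith
  have hu2 : (2:ℝ) - σ^2*2 ≠ 0 := by nlinarith
  have hl2 : l^2 < 1 := by nlinarith
  have hd1 : (0:ℝ) < 2 - (1-σ^2)*l^2 := by nlinarith [sq_nonneg (σ*l), sq_nonneg σ]
  have hd1' : (2:ℝ) - l^2 + σ^2*l^2 ≠ 0 := by nlinarith
  have hd1'' : (2:ℝ) - l^2 + l^2*σ^2 ≠ 0 := by nlinarith
  have hQ : (2:ℝ) - l ^ 2 + l ^ 2 * σ ^ 2 * 2 + (-(l ^ 2 * σ ^ 4) - σ ^ 2 * 2) ≠ 0 := by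
    nlinarith [mul_pos hupos hd1]
  have hd1n : (2:ℝ) - l^2*(1-σ^2) ≠ 0 := by nlinarith
  have hb1 : 0 < b1' σ l := div_pos hd1 (by nlinarith)
  have h : ∀ w : ℝ, Phi4' σ l x y v w = ((-(b1' σ l) : ℝ) : ℂ) * (w:ℂ)^2
      + (Complex.I * ((l^2 : ℝ):ℂ) * (v:ℂ) + ((2*σ/(1-σ^2)*y : ℝ):ℂ)) * (w:ℂ)
      + ( ((-(l^2/2)*x^2 + (l^2/2)*y^2 - (x^2+y^2+v^2)/(1-σ^2) + (2*σ/(1-σ^2))*x*v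
            - (l^2/2)*v^2 : ℝ):ℂ)
          - Complex.I * ((l^2*x*y : ℝ):ℂ) ) := by
    intro w
    simp only [Phi4', b1', Complex.ext_iff, pow_two, Complex.add_re, Complex.add_im,
      Complex.mul_re, Complex.mul_im, Complex.sub_re, Complex.sub_im, Complex.neg_re,
      Complex.neg_im, Complex.ofReal_re, Complex.ofReal_im, Complex.I_re, Complex.I_im,
      Complex.div_re, Complex.div_im, Complex.normSq_ofNat, Complex.ofReal_mul,
      Complex.ofReal_pow]
    norm_num
    constructor <;> ring_nf <;> field_simp <;> ring
  simp_rw [h]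
  rw [gauss_step hb1]
  congr 1
  congr 1
  simp only [Phi3', b1', b2', Complex.ext_iff, pow_two, Complex.add_re, Complex.add_im,
    Complex.mul_re, Complex.mul_im, Complex.sub_re, Complex.sub_im, Complex.neg_re,
    Complex.neg_im, Complex.ofReal_re, Complex.ofReal_im, Complex.I_re, Complex.I_im,
    Complex.div_re, Complex.div_im, Complex.normSq_ofNat, Complex.ofReal_mul,
    Complex.ofReal_pow]
  norm_num
  try constructor
  all_goals field_simp
  all_goals ring

lemma step_v (x y : ℝ) :
    ∫ v : ℝ, Complex.exp (Phi3' σ l x y v)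
      = ((Real.sqrt (Real.pi / b2' σ l) : ℝ) : ℂ) * Complex.exp (Phi2' σ l x y) := by
  have hu : (1:ℝ) - σ^2 ≠ 0 := by nlinarith
  have hupos : (0:ℝ) < 1 - σ^2 := by nlinarith
  have hu2 : (2:ℝ) - σ^2*2 ≠ 0 := by nlinarith
  have hl2 : l^2 < 1 := by nlinarith
  have hd1 : (0:ℝ) < 2 - (1-σ^2)*l^2 := by nlinarith [sq_nonneg (σ*l), sq_nonneg σ]
  have hd1' : (2:ℝ) - l^2 + σ^2*l^2 ≠ 0 := by nlinarith
  have hd1'' : (2:ℝ) - l^2 + l^2*σ^2 ≠ 0 := by nlinarith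
  have hQ : (2:ℝ) - l ^ 2 + l ^ 2 * σ ^ 2 * 2 + (-(l ^ 2 * σ ^ 4) - σ ^ 2 * 2) ≠ 0 := by
    nlinarith [mul_pos hupos hd1]
  have hd1n : (2:ℝ) - l^2*(1-σ^2) ≠ 0 := by nlinarith
  have hb2 : 0 < b2' σ l := div_pos two_pos (mul_pos hupos hd1)
  simp only [Phi3']
  rw [gauss_step hb2]
  congr 1
  congr 1
  simp only [Phi2', b2', b3', Complex.ext_iff, pow_two, Complex.add_re, Complex.add_im,
    Complex.mul_re, Complex.mul_im, Complex.sub_re, Complex.sub_im, Complex.neg_re,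
    Complex.neg_im, Complex.ofReal_re, Complex.ofReal_im, Complex.I_re, Complex.I_im,
    Complex.div_re, Complex.div_im, Complex.normSq_ofNat, Complex.ofReal_mul,
    Complex.ofReal_pow]
  norm_num
  try constructor
  all_goals field_simp
  all_goals ring

lemma step_y (x : ℝ) :
    ∫ y : ℝ, Complex.exp (Phi2' σ l x y)
      = ((Real.sqrt (Real.pi / b3' σ l) : ℝ) : ℂ) * Complex.exp (Phi1' σ l x) := by
  have hu : (1:ℝ) - σ^2 ≠ 0 := by nlinarith
  have hupos : (0:ℝ) < 1 - σ^2 := by nlinarith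
  have hl2 : l^2 < 1 := by nlinarith
  have hd3 : (0:ℝ) < 2 - l^2*(1+σ^2) := by nlinarith
  have hd3' : (2:ℝ) - l^2 - l^2*σ^2 ≠ 0 := by nlinarith
  have hd3'' : (2:ℝ) - l^2 - σ^2*l^2 ≠ 0 := by nlinarith
  have hd3a : (2:ℝ) + (-l ^ 2 - l ^ 2 * σ ^ 2) ≠ 0 := by nlinarith
  have hd3b : (4:ℝ) + (-(l ^ 2 * 2) - l ^ 2 * σ ^ 2 * 2) ≠ 0 := by nlinarith
  have hb3 : 0 < b3' σ l := div_pos hd3 two_pos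
  simp only [Phi2']
  rw [gauss_step hb3]
  congr 1
  congr 1
  simp only [Phi1', b3', b4', Complex.ext_iff, pow_two, Complex.add_re, Complex.add_im,
    Complex.mul_re, Complex.mul_im, Complex.sub_re, Complex.sub_im, Complex.neg_re,
    Complex.neg_im, Complex.ofReal_re, Complex.ofReal_im, Complex.I_re, Complex.I_im,
    Complex.div_re, Complex.div_im, Complex.normSq_ofNat, Complex.ofReal_mul,
    Complex.ofReal_pow]
  norm_num
  try constructor
  all_goals ring_nf
  all_goals field_simp
  all_goals ring

lemma step_x :
    ∫ x : ℝ, Complex.exp (Phi1' σ l x)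
      = ((Real.sqrt (Real.pi / b4' σ l) : ℝ) : ℂ) := by
  have hupos : (0:ℝ) < 1 - σ^2 := by nlinarith
  have hl2 : l^2 < 1 := by nlinarith
  have hd3 : (0:ℝ) < 2 - l^2*(1+σ^2) := by nlinarith
  have h4 : (0:ℝ) < 1 - σ^2*l^4 := by nlinarith [sq_nonneg (σ*l^2), sq_nonneg σ, sq_nonneg (l^2)]
  have hb4 : 0 < b4' σ l := div_pos (by nlinarith) hd3
  simp only [Phi1']
  rw [gauss_step hb4]
  norm_num

end Steps

lemma Phi4'_re (σ l x y v w : ℝ) :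
    (Phi4' σ l x y v w).re
      = -(l^2/2)*(x^2-y^2+v^2-w^2) - (x^2+y^2+v^2+w^2-2*σ*(x*v+y*w))/(1-σ^2) := by
  simp only [Phi4', pow_two, Complex.add_re, Complex.mul_re, Complex.sub_re, Complex.sub_im,
    Complex.add_im, Complex.mul_im, Complex.neg_re, Complex.neg_im, Complex.ofReal_re,
    Complex.ofReal_im, Complex.I_re, Complex.I_im, Complex.div_re, Complex.div_im,
    Complex.normSq_ofNat]
  norm_num
  ring

section Bounds

variable {σ l : ℝ} (hσ : σ^2 < 1) (hl0 : 0 < l) (hl1 : l < 1)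
include hσ hl0 hl1

lemma Phi4'_norm (x y v w : ℝ) :
    ‖Complex.exp (Phi4' σ l x y v w)‖
      ≤ Real.exp (-((1-l^2)/2)*x^2) * Real.exp (-((1-l^2)/2)*y^2)
        * Real.exp (-((1-l^2)/2)*v^2) * Real.exp (-((1-l^2)/2)*w^2) := by
  rw [Complex.norm_exp, Phi4'_re]
  rw [← Real.exp_add, ← Real.exp_add, ← Real.exp_add]
  apply Real.exp_le_exp.mpr
  have hupos : (0:ℝ) < 1 - σ^2 := by nlinarith
  have key1 : (x^2+v^2)/2 * (1-σ^2) ≤ x^2+v^2-2*σ*(x*v) := by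
    nlinarith [sq_nonneg (x-σ*v), sq_nonneg (v-σ*x)]
  have key2 : (y^2+w^2)/2 * (1-σ^2) ≤ y^2+w^2-2*σ*(y*w) := by
    nlinarith [sq_nonneg (y-σ*w), sq_nonneg (w-σ*y)]
  have k1 : (x^2+v^2)/2 ≤ (x^2+v^2-2*σ*(x*v))/(1-σ^2) := (le_div_iff₀ hupos).mpr key1
  have k2 : (y^2+w^2)/2 ≤ (y^2+w^2-2*σ*(y*w))/(1-σ^2) := (le_div_iff₀ hupos).mpr key2
  have split : (x^2+y^2+v^2+w^2-2*σ*(x*v+y*w))/(1-σ^2)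
      = (x^2+v^2-2*σ*(x*v))/(1-σ^2) + (y^2+w^2-2*σ*(y*w))/(1-σ^2) := by ring
  rw [split]
  nlinarith [k1, k2, mul_nonneg (sq_nonneg l) (sq_nonneg x), mul_nonneg (sq_nonneg l) (sq_nonneg v)]

lemma int2' (x y : ℝ) :
    Integrable (fun r : ℝ × ℝ => Complex.exp (Phi4' σ l x y r.1 r.2)) := by
  have hc : (0:ℝ) < (1-l^2)/2 := by nlinarith
  have hg : Integrable (fun r : ℝ×ℝ =>
      Real.exp (-((1-l^2)/2)*r.1^2) * Real.exp (-((1-l^2)/2)*r.2^2)) := by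
    rw [Measure.volume_eq_prod]
    exact (integrable_exp_neg_mul_sq hc).mul_prod (integrable_exp_neg_mul_sq hc)
  refine hg.mono ?_ ?_
  · apply Continuous.aestronglyMeasurable
    unfold Phi4'
    fun_prop
  · refine Filter.Eventually.of_forall fun r => ?_
    have hb := Phi4'_norm hσ hl0 hl1 x y r.1 r.2
    have h1 : Real.exp (-((1-l^2)/2)*x^2) ≤ 1 :=
      Real.exp_le_one_iff.mpr (by nlinarith [sq_nonneg x])
    have h2 : Real.exp (-((1-l^2)/2)*y^2) ≤ 1 :=
      Real.exp_le_one_iff.mpr (by nlinarith [sq_nonneg y])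
    rw [Real.norm_eq_abs, abs_of_pos (by positivity)]
    refine hb.trans ?_
    rw [mul_assoc]
    exact mul_le_of_le_one_left (by positivity)
      (mul_le_one₀ h1 (Real.exp_pos _).le h2)

lemma int3' (x : ℝ) :
    Integrable (fun q : ℝ × ℝ × ℝ => Complex.exp (Phi4' σ l x q.1 q.2.1 q.2.2)) := by
  have hc : (0:ℝ) < (1-l^2)/2 := by nlinarith
  have hinner : Integrable (fun r : ℝ×ℝ =>
      Real.exp (-((1-l^2)/2)*r.1^2) * Real.exp (-((1-l^2)/2)*r.2^2)) := by
    rw [Measure.volume_eq_prod]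
    exact (integrable_exp_neg_mul_sq hc).mul_prod (integrable_exp_neg_mul_sq hc)
  have hg : Integrable (fun q : ℝ×ℝ×ℝ => Real.exp (-((1-l^2)/2)*q.1^2) *
      (Real.exp (-((1-l^2)/2)*q.2.1^2) * Real.exp (-((1-l^2)/2)*q.2.2^2))) := by
    rw [Measure.volume_eq_prod]
    exact (integrable_exp_neg_mul_sq hc).mul_prod hinner
  refine hg.mono ?_ ?_
  · apply Continuous.aestronglyMeasurable
    unfold Phi4'
    fun_prop
  · refine Filter.Eventually.of_forall fun q => ?_
    have hb := Phi4'_norm hσ hl0 hl1 x q.1 q.2.1 q.2.2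
    have h1 : Real.exp (-((1-l^2)/2)*x^2) ≤ 1 :=
      Real.exp_le_one_iff.mpr (by nlinarith [sq_nonneg x])
    rw [Real.norm_eq_abs, abs_of_pos (by positivity)]
    refine hb.trans ?_
    rw [mul_assoc, mul_assoc]
    exact mul_le_of_le_one_left (by positivity) h1

lemma int4' :
    Integrable (fun p : ℝ × ℝ × ℝ × ℝ =>
      Complex.exp (Phi4' σ l p.1 p.2.1 p.2.2.1 p.2.2.2)) := by
  have hc : (0:ℝ) < (1-l^2)/2 := by nlinarith
  have hinner : Integrable (fun r : ℝ×ℝ =>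
      Real.exp (-((1-l^2)/2)*r.1^2) * Real.exp (-((1-l^2)/2)*r.2^2)) := by
    rw [Measure.volume_eq_prod]
    exact (integrable_exp_neg_mul_sq hc).mul_prod (integrable_exp_neg_mul_sq hc)
  have hinner3 : Integrable (fun q : ℝ×ℝ×ℝ => Real.exp (-((1-l^2)/2)*q.1^2) *
      (Real.exp (-((1-l^2)/2)*q.2.1^2) * Real.exp (-((1-l^2)/2)*q.2.2^2))) := by
    rw [Measure.volume_eq_prod]
    exact (integrable_exp_neg_mul_sq hc).mul_prod hinner
  have hg : Integrable (fun p : ℝ×ℝ×ℝ×ℝ => Real.exp (-((1-l^2)/2)*p.1^2) *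
      (Real.exp (-((1-l^2)/2)*p.2.1^2) *
        (Real.exp (-((1-l^2)/2)*p.2.2.1^2) * Real.exp (-((1-l^2)/2)*p.2.2.2^2)))) := by
    rw [Measure.volume_eq_prod]
    exact (integrable_exp_neg_mul_sq hc).mul_prod hinner3
  refine hg.mono ?_ ?_
  · apply Continuous.aestronglyMeasurable
    unfold Phi4'
    fun_prop
  · refine Filter.Eventually.of_forall fun p => ?_
    have hb := Phi4'_norm hσ hl0 hl1 p.1 p.2.1 p.2.2.1 p.2.2.2
    rw [Real.norm_eq_abs, abs_of_pos (by positivity)]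
    refine hb.trans (le_of_eq ?_)
    ring

end Bounds


/-- The four-dimensional Gaussian computation at the heart of Lemma A.5: for
`σ ∈ (−1,1)` and `λ ∈ (0,1)`,
`∫_{ℝ⁴} exp(−(λ²/2)((x+iy)² + (v−iw)²)) exp(−(x²+y²+v²+w² − 2σ(xv+yw))/(1−σ²)) dx dy dv dw
  = π² (1−σ²) / √(1−σ²λ⁴)`. -/
theorem gaussian_integral_four_dim (σ l : ℝ) (hσ : σ ∈ Set.Ioo (-1 : ℝ) 1)
    (hl : l ∈ Set.Ioo (0 : ℝ) 1) :
    (∫ p : ℝ × ℝ × ℝ × ℝ,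
        Complex.exp (-((l : ℂ) ^ 2 / 2) *
            (((p.1 : ℂ) + (p.2.1 : ℂ) * Complex.I) ^ 2 +
              ((p.2.2.1 : ℂ) - (p.2.2.2 : ℂ) * Complex.I) ^ 2)) *
          (Real.exp (-(p.1 ^ 2 + p.2.1 ^ 2 + p.2.2.1 ^ 2 + p.2.2.2 ^ 2 -
              2 * σ * (p.1 * p.2.2.1 + p.2.1 * p.2.2.2)) / (1 - σ ^ 2)) : ℂ)) =
      ((Real.pi ^ 2 * (1 - σ ^ 2) / Real.sqrt (1 - σ ^ 2 * l ^ 4) : ℝ) : ℂ) := by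
  obtain ⟨hσ1, hσ2⟩ := hσ
  obtain ⟨hl0, hl1⟩ := hl
  have hσq : σ^2 < 1 := by nlinarith
  have hupos : (0:ℝ) < 1 - σ^2 := by nlinarith
  have hl2 : l^2 < 1 := by nlinarith
  have hd1 : (0:ℝ) < 2 - (1-σ^2)*l^2 := by nlinarith [sq_nonneg (σ*l), sq_nonneg σ]
  have hd3 : (0:ℝ) < 2 - l^2*(1+σ^2) := by nlinarith
  have h4 : (0:ℝ) < 1 - σ^2*l^4 := by nlinarith [sq_nonneg (σ*l^2)]
  have hb1 : 0 < b1' σ l := div_pos hd1 (by nlinarith)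
  have hb2 : 0 < b2' σ l := div_pos two_pos (mul_pos hupos hd1)
  have hb3 : 0 < b3' σ l := div_pos hd3 two_pos
  have hb4 : 0 < b4' σ l := div_pos (by nlinarith) hd3
  have heq : ∀ p : ℝ × ℝ × ℝ × ℝ,
      Complex.exp (-((l : ℂ) ^ 2 / 2) *
            (((p.1 : ℂ) + (p.2.1 : ℂ) * Complex.I) ^ 2 +
              ((p.2.2.1 : ℂ) - (p.2.2.2 : ℂ) * Complex.I) ^ 2)) *
          (Real.exp (-(p.1 ^ 2 + p.2.1 ^ 2 + p.2.2.1 ^ 2 + p.2.2.2 ^ 2 -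
              2 * σ * (p.1 * p.2.2.1 + p.2.1 * p.2.2.2)) / (1 - σ ^ 2)) : ℂ)
        = Complex.exp (Phi4' σ l p.1 p.2.1 p.2.2.1 p.2.2.2) := by
    intro p
    simp only [Phi4']
    rw [Complex.ofReal_exp, ← Complex.exp_add]
  refine (integral_congr_ae (Filter.Eventually.of_forall heq)).trans ?_
  have H2 : ∀ x y, (∫ r : ℝ × ℝ, Complex.exp (Phi4' σ l x y r.1 r.2))
      = ((Real.sqrt (Real.pi / b1' σ l) : ℝ) : ℂ) *
        (((Real.sqrt (Real.pi / b2' σ l) : ℝ) : ℂ) * Complex.exp (Phi2' σ l x y)) := by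
    intro x y
    rw [Measure.volume_eq_prod, MeasureTheory.integral_prod _ (int2' hσq hl0 hl1 x y)]
    simp_rw [step_w hσq hl0 hl1 x y]
    rw [MeasureTheory.integral_const_mul, step_v hσq hl0 hl1 x y]
  have H3 : ∀ x, (∫ q : ℝ × ℝ × ℝ, Complex.exp (Phi4' σ l x q.1 q.2.1 q.2.2))
      = ((Real.sqrt (Real.pi / b1' σ l) : ℝ) : ℂ) *
        (((Real.sqrt (Real.pi / b2' σ l) : ℝ) : ℂ) *
          (((Real.sqrt (Real.pi / b3' σ l) : ℝ) : ℂ) * Complex.exp (Phi1' σ l x))) := by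
    intro x
    rw [Measure.volume_eq_prod, MeasureTheory.integral_prod _ (int3' hσq hl0 hl1 x)]
    simp_rw [H2]
    rw [MeasureTheory.integral_const_mul, MeasureTheory.integral_const_mul,
      step_y hσq hl0 hl1 x]
  rw [Measure.volume_eq_prod, MeasureTheory.integral_prod _ (int4' hσq hl0 hl1)]
  simp_rw [H3]
  rw [MeasureTheory.integral_const_mul, MeasureTheory.integral_const_mul,
    MeasureTheory.integral_const_mul, step_x hσq hl0 hl1]
  rw [← Complex.ofReal_mul, ← Complex.ofReal_mul, ← Complex.ofReal_mul]
  congr 1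
  have hprod : Real.pi/b1' σ l*(Real.pi/b2' σ l*(Real.pi/b3' σ l*(Real.pi/b4' σ l)))
      = (Real.pi^2*(1-σ^2))^2/(1-σ^2*l^4) := by
    unfold b1' b2' b3' b4'
    field_simp
  rw [← Real.sqrt_mul (by positivity) (Real.pi/b4' σ l),
    ← Real.sqrt_mul (by positivity), ← Real.sqrt_mul (by positivity), hprod,
    Real.sqrt_div (sq_nonneg _), Real.sqrt_sq (by positivity)]
end
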